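/- arXiv:1004.2000 — 3 statements merged into one kernel-verified Lean document; each statement's English description precedes it below -/
import Mathlib

section
/- There is an absolute constant C > 0 such that the following holds. Let A and E be n × n real matrices, let σ₁ ≥ σ₂ be the two largest singular values of A with gap δ := σ₁ − σ₂ > 0, let v₁ be a unit singular vector of A corresponding to σ₁, and let v₁′ be a unit singular vector of A + E corresponding to the largest singular value of A + E. Then sin ∠(v₁, v₁′) ≤ C·‖E‖/δ. -/
open MeasureTheory ProbabilityTheory Matrix

noncomputable def eucNorm {n : ℕ} (v : Fin n → ℝ) : ℝ := Real.sqrt (∑ i, v i ^ 2)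

/-- The `k`-th largest singular value (k ≥ 1) of a square real matrix, via the
Courant–Fischer minimax characterization. -/
noncomputable def singVal {n : ℕ} (M : Matrix (Fin n) (Fin n) ℝ) (k : ℕ) : ℝ :=
  sSup {x : ℝ | ∃ H : Submodule ℝ (Fin n → ℝ), Module.finrank ℝ H = k ∧
    x = sInf {y : ℝ | ∃ v ∈ H, eucNorm v = 1 ∧ y = eucNorm (M.mulVec v)}}

/-- The spectral norm of a square real matrix. -/
noncomputable def specNorm {n : ℕ} (M : Matrix (Fin n) (Fin n) ℝ) : ℝ :=
  sSup {x : ℝ | ∃ v : Fin n → ℝ, eucNorm v = 1 ∧ x = eucNorm (M.mulVec v)}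

/-- `v` is a unit singular vector of `M` corresponding to the singular value `σ`. -/
def IsUnitSingVec {n : ℕ} (M : Matrix (Fin n) (Fin n) ℝ) (σ : ℝ) (v : Fin n → ℝ) : Prop :=
  eucNorm v = 1 ∧ (Mᵀ * M).mulVec v = σ ^ 2 • v

/-- `sin ∠(u,v) = √(1 - (u·v)²)` for unit vectors `u, v`. -/
noncomputable def sinAngle {n : ℕ} (u v : Fin n → ℝ) : ℝ :=
  Real.sqrt (1 - (∑ i, u i * v i) ^ 2)

/-- `E` is a random Bernoulli matrix: independent entries, each `±1` with probability `1/2`. -/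
def IsBernoulliMatrix {Ω : Type} [MeasurableSpace Ω] (μ : Measure Ω) {n : ℕ}
    (E : Ω → Matrix (Fin n) (Fin n) ℝ) : Prop :=
  (∀ i j, Measurable fun ω => E ω i j) ∧
  iIndepFun (fun (p : Fin n × Fin n) (ω : Ω) => E ω p.1 p.2) μ ∧
  ∀ i j, μ {ω | E ω i j = 1} = 1/2 ∧ μ {ω | E ω i j = -1} = 1/2

namespace WedinAux

variable {n : ℕ}


noncomputable def toE (v : Fin n → ℝ) : EuclideanSpace ℝ (Fin n) :=
  (WithLp.equiv 2 (Fin n → ℝ)).symm v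

lemma eucNorm_eq_norm (v : Fin n → ℝ) : eucNorm v = ‖toE v‖ := by
  rw [EuclideanSpace.norm_eq, eucNorm]
  congr 1
  refine Finset.sum_congr rfl fun i _ => ?_
  simp [toE, Real.norm_eq_abs, sq_abs]

lemma inner_toE (u v : Fin n → ℝ) : (inner ℝ (toE u) (toE v) : ℝ) = u ⬝ᵥ v := by
  simp [toE, PiLp.inner_apply, RCLike.inner_apply, dotProduct, mul_comm]

lemma dot_le_norm_mul_norm (u v : Fin n → ℝ) : u ⬝ᵥ v ≤ eucNorm u * eucNorm v := by
  rw [eucNorm_eq_norm, eucNorm_eq_norm, ← inner_toE]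
  exact real_inner_le_norm _ _

lemma eucNorm_nonneg (v : Fin n → ℝ) : 0 ≤ eucNorm v := Real.sqrt_nonneg _

lemma eucNorm_sq (v : Fin n → ℝ) : eucNorm v ^ 2 = v ⬝ᵥ v := by
  rw [eucNorm, Real.sq_sqrt (Finset.sum_nonneg fun i _ => sq_nonneg _)]
  simp [dotProduct, sq]

lemma eucNorm_smul (a : ℝ) (v : Fin n → ℝ) : eucNorm (a • v) = |a| * eucNorm v := by
  rw [eucNorm_eq_norm, eucNorm_eq_norm]
  have : toE (a • v) = a • toE v := rfl
  rw [this, norm_smul, Real.norm_eq_abs]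

lemma eucNorm_add_le (u v : Fin n → ℝ) : eucNorm (u + v) ≤ eucNorm u + eucNorm v := by
  rw [eucNorm_eq_norm, eucNorm_eq_norm, eucNorm_eq_norm]
  have : toE (u + v) = toE u + toE v := rfl
  rw [this]; exact norm_add_le _ _

lemma eucNorm_zero : eucNorm (0 : Fin n → ℝ) = 0 := by simp [eucNorm]

lemma eucNorm_eq_zero {v : Fin n → ℝ} (h : eucNorm v = 0) : v = 0 := by
  rw [eucNorm_eq_norm] at h
  have := norm_eq_zero.mp h
  exact congrArg (WithLp.equiv 2 (Fin n → ℝ)) this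


lemma abs_dot_le (u v : Fin n → ℝ) : |u ⬝ᵥ v| ≤ eucNorm u * eucNorm v := by
  rw [eucNorm_eq_norm, eucNorm_eq_norm, ← inner_toE]
  exact abs_real_inner_le_norm _ _

lemma dot_self_nonneg (v : Fin n → ℝ) : 0 ≤ v ⬝ᵥ v := by
  rw [← eucNorm_sq]; exact sq_nonneg _

lemma eucNorm_eq_sqrt_dot (v : Fin n → ℝ) : eucNorm v = Real.sqrt (v ⬝ᵥ v) := by
  rw [← eucNorm_sq, Real.sqrt_sq (eucNorm_nonneg v)]

lemma dot_sq_le (u v : Fin n → ℝ) : (u ⬝ᵥ v) ^ 2 ≤ (u ⬝ᵥ u) * (v ⬝ᵥ v) := by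
  have h := abs_dot_le u v
  have h2 : |u ⬝ᵥ v| ^ 2 ≤ (eucNorm u * eucNorm v) ^ 2 :=
    pow_le_pow_left₀ (abs_nonneg _) h 2
  rw [sq_abs, mul_pow, eucNorm_sq, eucNorm_sq] at h2
  exact h2

lemma dot_mulVec (u : Fin n → ℝ) (M : Matrix (Fin n) (Fin n) ℝ) (v : Fin n → ℝ) :
    u ⬝ᵥ (M *ᵥ v) = (Mᵀ *ᵥ u) ⬝ᵥ v := by
  rw [Matrix.dotProduct_mulVec, Matrix.mulVec_transpose]

lemma dot_mulVec_self (M : Matrix (Fin n) (Fin n) ℝ) (v w : Fin n → ℝ) :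
    (M *ᵥ v) ⬝ᵥ (M *ᵥ w) = v ⬝ᵥ ((Mᵀ * M) *ᵥ w) := by
  rw [← Matrix.mulVec_mulVec, dot_mulVec v Mᵀ (M *ᵥ w), Matrix.transpose_transpose]

noncomputable def frob (M : Matrix (Fin n) (Fin n) ℝ) : ℝ :=
  Real.sqrt (∑ i, ∑ j, M i j ^ 2)

lemma frob_nonneg (M : Matrix (Fin n) (Fin n) ℝ) : 0 ≤ frob M := Real.sqrt_nonneg _

lemma mulVec_le_frob (M : Matrix (Fin n) (Fin n) ℝ) (v : Fin n → ℝ) :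
    eucNorm (M *ᵥ v) ≤ frob M * eucNorm v := by
  have key : (M *ᵥ v) ⬝ᵥ (M *ᵥ v) ≤ (∑ i, ∑ j, M i j ^ 2) * (v ⬝ᵥ v) := by
    have : (M *ᵥ v) ⬝ᵥ (M *ᵥ v) = ∑ i, (M i ⬝ᵥ v) ^ 2 := by
      simp [dotProduct, Matrix.mulVec, sq]
    rw [this, Finset.sum_mul]
    refine Finset.sum_le_sum fun i _ => ?_
    have := dot_sq_le (M i) v
    have hMi : M i ⬝ᵥ M i = ∑ j, M i j ^ 2 := by simp [dotProduct, sq]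
    rw [hMi] at this
    exact this
  calc eucNorm (M *ᵥ v) = Real.sqrt ((M *ᵥ v) ⬝ᵥ (M *ᵥ v)) := eucNorm_eq_sqrt_dot _
    _ ≤ Real.sqrt ((∑ i, ∑ j, M i j ^ 2) * (v ⬝ᵥ v)) := Real.sqrt_le_sqrt key
    _ = frob M * eucNorm v := by
        rw [Real.sqrt_mul' _ (dot_self_nonneg v),
          frob, eucNorm_eq_sqrt_dot]


def innerSet (M : Matrix (Fin n) (Fin n) ℝ) (H : Submodule ℝ (Fin n → ℝ)) : Set ℝ :=
  {y : ℝ | ∃ v ∈ H, eucNorm v = 1 ∧ y = eucNorm (M.mulVec v)}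

def outerSet (M : Matrix (Fin n) (Fin n) ℝ) (k : ℕ) : Set ℝ :=
  {x : ℝ | ∃ H : Submodule ℝ (Fin n → ℝ), Module.finrank ℝ H = k ∧ x = sInf (innerSet M H)}

lemma singVal_eq (M : Matrix (Fin n) (Fin n) ℝ) (k : ℕ) :
    singVal M k = sSup (outerSet M k) := rfl

lemma innerSet_nonneg {M : Matrix (Fin n) (Fin n) ℝ} {H} {y : ℝ} (hy : y ∈ innerSet M H) :
    0 ≤ y := by
  obtain ⟨v, -, -, rfl⟩ := hy; exact eucNorm_nonneg _

lemma innerSet_bddBelow (M : Matrix (Fin n) (Fin n) ℝ) (H) : BddBelow (innerSet M H) :=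
  ⟨0, fun y hy => innerSet_nonneg hy⟩

lemma innerSet_le_frob {M : Matrix (Fin n) (Fin n) ℝ} {H} {y : ℝ} (hy : y ∈ innerSet M H) :
    y ≤ frob M := by
  obtain ⟨v, -, hv1, rfl⟩ := hy
  calc eucNorm (M *ᵥ v) ≤ frob M * eucNorm v := mulVec_le_frob M v
    _ = frob M := by rw [hv1, mul_one]

lemma outer_le_frob {M : Matrix (Fin n) (Fin n) ℝ} {k : ℕ} {x : ℝ} (hx : x ∈ outerSet M k) :
    x ≤ frob M := by
  obtain ⟨H, -, rfl⟩ := hx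
  by_cases h : (innerSet M H).Nonempty
  · obtain ⟨y, hy⟩ := h
    exact le_trans (csInf_le (innerSet_bddBelow M H) hy) (innerSet_le_frob hy)
  · rw [Set.not_nonempty_iff_eq_empty.mp h, Real.sInf_empty]
    exact frob_nonneg M

lemma outerSet_bddAbove (M : Matrix (Fin n) (Fin n) ℝ) (k : ℕ) : BddAbove (outerSet M k) :=
  ⟨frob M, fun _ hx => outer_le_frob hx⟩

lemma singVal_nonneg (M : Matrix (Fin n) (Fin n) ℝ) (k : ℕ) : 0 ≤ singVal M k := by
  rw [singVal_eq]
  refine Real.sSup_nonneg fun x hx => ?_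
  obtain ⟨H, -, rfl⟩ := hx
  exact Real.sInf_nonneg fun y hy => innerSet_nonneg hy

lemma singVal_le {M : Matrix (Fin n) (Fin n) ℝ} {k : ℕ} {c : ℝ}
    (h : ∀ v : Fin n → ℝ, eucNorm v = 1 → eucNorm (M *ᵥ v) ≤ c) (hc : 0 ≤ c) :
    singVal M k ≤ c := by
  rw [singVal_eq]
  refine Real.sSup_le (fun x hx => ?_) hc
  obtain ⟨H, -, rfl⟩ := hx
  by_cases hne : (innerSet M H).Nonempty
  · obtain ⟨y, hy⟩ := hne
    refine le_trans (csInf_le (innerSet_bddBelow M H) hy) ?_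
    obtain ⟨v, -, hv1, rfl⟩ := hy
    exact h v hv1
  · rw [Set.not_nonempty_iff_eq_empty.mp hne, Real.sInf_empty]; exact hc

lemma normalize_unit {v : Fin n → ℝ} (hv : v ≠ 0) : eucNorm ((eucNorm v)⁻¹ • v) = 1 := by
  have h0 : eucNorm v ≠ 0 := fun h => hv (eucNorm_eq_zero h)
  have hpos : 0 < eucNorm v := lt_of_le_of_ne (eucNorm_nonneg v) (Ne.symm h0)
  rw [eucNorm_smul, abs_inv, abs_of_pos hpos, inv_mul_cancel₀ h0]

lemma innerSet_span_singleton (M : Matrix (Fin n) (Fin n) ℝ) {u : Fin n → ℝ}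
    (hu : eucNorm u = 1) :
    innerSet M (Submodule.span ℝ {u}) = {eucNorm (M *ᵥ u)} := by
  ext y
  constructor
  · rintro ⟨v, hvH, hv1, rfl⟩
    obtain ⟨a, rfl⟩ := Submodule.mem_span_singleton.mp hvH
    rw [eucNorm_smul, hu, mul_one] at hv1
    rw [Matrix.mulVec_smul, eucNorm_smul, hv1, one_mul]
    rfl
  · rintro rfl
    exact ⟨u, Submodule.mem_span_singleton_self u, hu, rfl⟩

lemma le_singVal_one (M : Matrix (Fin n) (Fin n) ℝ) {u : Fin n → ℝ} (hu : eucNorm u = 1) :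
    eucNorm (M *ᵥ u) ≤ singVal M 1 := by
  have hu0 : u ≠ 0 := fun h => by simp [h, eucNorm_zero] at hu
  rw [singVal_eq]
  refine le_csSup (outerSet_bddAbove M 1) ?_
  exact ⟨Submodule.span ℝ {u}, finrank_span_singleton hu0,
    by rw [innerSet_span_singleton M hu, csInf_singleton]⟩

lemma mulVec_le_singVal_one (M : Matrix (Fin n) (Fin n) ℝ) (v : Fin n → ℝ) :
    eucNorm (M *ᵥ v) ≤ singVal M 1 * eucNorm v := by
  by_cases hv : v = 0
  · simp [hv, Matrix.mulVec_zero, eucNorm_zero]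
  · have h0 : eucNorm v ≠ 0 := fun h => hv (eucNorm_eq_zero h)
    have hpos : 0 < eucNorm v := lt_of_le_of_ne (eucNorm_nonneg v) (Ne.symm h0)
    have := le_singVal_one M (normalize_unit hv)
    rw [Matrix.mulVec_smul, eucNorm_smul, abs_inv, abs_of_pos hpos] at this
    calc eucNorm (M *ᵥ v) = eucNorm v * ((eucNorm v)⁻¹ * eucNorm (M *ᵥ v)) := by
          field_simp
      _ ≤ eucNorm v * singVal M 1 := by
          exact mul_le_mul_of_nonneg_left this (le_of_lt hpos)
      _ = singVal M 1 * eucNorm v := mul_comm _ _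

-- specNorm
def specSet (M : Matrix (Fin n) (Fin n) ℝ) : Set ℝ :=
  {x : ℝ | ∃ v : Fin n → ℝ, eucNorm v = 1 ∧ x = eucNorm (M.mulVec v)}

lemma specNorm_eq (M : Matrix (Fin n) (Fin n) ℝ) : specNorm M = sSup (specSet M) := rfl

lemma specSet_bddAbove (M : Matrix (Fin n) (Fin n) ℝ) : BddAbove (specSet M) := by
  refine ⟨frob M, fun x hx => ?_⟩
  obtain ⟨v, hv1, rfl⟩ := hx
  calc eucNorm (M *ᵥ v) ≤ frob M * eucNorm v := mulVec_le_frob M v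
    _ = frob M := by rw [hv1, mul_one]

lemma specNorm_nonneg (M : Matrix (Fin n) (Fin n) ℝ) : 0 ≤ specNorm M := by
  rw [specNorm_eq]
  refine Real.sSup_nonneg fun x hx => ?_
  obtain ⟨v, -, rfl⟩ := hx
  exact eucNorm_nonneg _

lemma le_specNorm (M : Matrix (Fin n) (Fin n) ℝ) {u : Fin n → ℝ} (hu : eucNorm u = 1) :
    eucNorm (M *ᵥ u) ≤ specNorm M := by
  rw [specNorm_eq]
  exact le_csSup (specSet_bddAbove M) ⟨u, hu, rfl⟩

lemma mulVec_le_specNorm (M : Matrix (Fin n) (Fin n) ℝ) (v : Fin n → ℝ) :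
    eucNorm (M *ᵥ v) ≤ specNorm M * eucNorm v := by
  by_cases hv : v = 0
  · simp [hv, Matrix.mulVec_zero, eucNorm_zero]
  · have h0 : eucNorm v ≠ 0 := fun h => hv (eucNorm_eq_zero h)
    have hpos : 0 < eucNorm v := lt_of_le_of_ne (eucNorm_nonneg v) (Ne.symm h0)
    have := le_specNorm M (normalize_unit hv)
    rw [Matrix.mulVec_smul, eucNorm_smul, abs_inv, abs_of_pos hpos] at this
    calc eucNorm (M *ᵥ v) = eucNorm v * ((eucNorm v)⁻¹ * eucNorm (M *ᵥ v)) := by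
          field_simp
      _ ≤ eucNorm v * specNorm M := mul_le_mul_of_nonneg_left this (le_of_lt hpos)
      _ = specNorm M * eucNorm v := mul_comm _ _


lemma dot_A_le_singVal_two (A : Matrix (Fin n) (Fin n) ℝ) {v₁ w : Fin n → ℝ}
    (hv1 : eucNorm v₁ = 1) (hS : (Aᵀ * A) *ᵥ v₁ = (singVal A 1) ^ 2 • v₁)
    (hw : eucNorm w = 1) (horth : v₁ ⬝ᵥ w = 0) :
    (A *ᵥ w) ⬝ᵥ (A *ᵥ w) ≤ (singVal A 2) ^ 2 := by
  set μ : ℝ := (singVal A 1) ^ 2 with hμ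
  set q : ℝ := (A *ᵥ w) ⬝ᵥ (A *ᵥ w) with hqdef
  have hq0 : 0 ≤ q := dot_self_nonneg _
  have hqS : q = w ⬝ᵥ ((Aᵀ * A) *ᵥ w) := dot_mulVec_self A w w
  have hqμ : q ≤ μ := by
    have h1 : eucNorm (A *ᵥ w) ≤ singVal A 1 := by
      have := mulVec_le_singVal_one A w; rw [hw, mul_one] at this; exact this
    have h2 : eucNorm (A *ᵥ w) ^ 2 ≤ (singVal A 1) ^ 2 :=
      pow_le_pow_left₀ (eucNorm_nonneg _) h1 2
    rw [eucNorm_sq] at h2; exact h2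
  have hv₁v₁ : v₁ ⬝ᵥ v₁ = 1 := by rw [← eucNorm_sq, hv1]; norm_num
  have hww : w ⬝ᵥ w = 1 := by rw [← eucNorm_sq, hw]; norm_num
  have hwv : w ⬝ᵥ v₁ = 0 := by rw [dotProduct_comm]; exact horth
  -- cross terms
  have hSv₁ : (Aᵀ * A) *ᵥ v₁ = μ • v₁ := hS
  have hsymm : (Aᵀ * A)ᵀ = Aᵀ * A := by
    rw [Matrix.transpose_mul, Matrix.transpose_transpose]
  have hcross : v₁ ⬝ᵥ ((Aᵀ * A) *ᵥ w) = 0 := by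
    rw [dot_mulVec, hsymm, hSv₁, smul_dotProduct, horth, smul_zero]
  have hcross' : w ⬝ᵥ ((Aᵀ * A) *ᵥ v₁) = 0 := by
    rw [hSv₁, dotProduct_smul, hwv, smul_zero]
  -- linear independence
  have hLI : LinearIndependent ℝ ![v₁, w] := by
    rw [LinearIndependent.pair_iff]
    intro a b hab
    have h1 : (a • v₁ + b • w) ⬝ᵥ v₁ = a := by
      rw [add_dotProduct, smul_dotProduct, smul_dotProduct, hv₁v₁, hwv]
      simp
    have h2 : (a • v₁ + b • w) ⬝ᵥ w = b := by
      rw [add_dotProduct, smul_dotProduct, smul_dotProduct, hww, horth]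
      simp
    rw [hab] at h1 h2
    simp only [zero_dotProduct] at h1 h2
    exact ⟨h1.symm, h2.symm⟩
  have hrange : Set.range ![v₁, w] = {v₁, w} := by
    ext x
    simp [Fin.exists_fin_two, eq_comm]
    tauto
  have hrank : Module.finrank ℝ (Submodule.span ℝ {v₁, w}) = 2 := by
    have := finrank_span_eq_card hLI
    rw [hrange] at this
    simpa using this
  set H := Submodule.span ℝ ({v₁, w} : Set (Fin n → ℝ)) with hH
  -- all elements of innerSet A H are ≥ √q
  have hbound : ∀ y ∈ innerSet A H, Real.sqrt q ≤ y := by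
    rintro y ⟨v, hvH, hv1', rfl⟩
    obtain ⟨a, b, rfl⟩ := Submodule.mem_span_pair.mp hvH
    have hnorm : a ^ 2 + b ^ 2 = 1 := by
      have h := eucNorm_sq (a • v₁ + b • w)
      rw [hv1'] at h
      have hexp : (a • v₁ + b • w) ⬝ᵥ (a • v₁ + b • w) = a ^ 2 + b ^ 2 := by
        rw [dotProduct_add, add_dotProduct, add_dotProduct,
          smul_dotProduct, smul_dotProduct, smul_dotProduct, smul_dotProduct,
          dotProduct_smul, dotProduct_smul, dotProduct_smul, dotProduct_smul,
          hv₁v₁, hww, horth, hwv]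
        ring_nf
      rw [hexp] at h
      linarith [h]
    have hsq : eucNorm (A *ᵥ (a • v₁ + b • w)) ^ 2 = a ^ 2 * μ + b ^ 2 * q := by
      rw [eucNorm_sq, dot_mulVec_self]
      have hSv : (Aᵀ * A) *ᵥ (a • v₁ + b • w)
          = a • ((Aᵀ * A) *ᵥ v₁) + b • ((Aᵀ * A) *ᵥ w) := by
        rw [Matrix.mulVec_add, Matrix.mulVec_smul, Matrix.mulVec_smul]
      rw [hSv]
      rw [add_dotProduct, smul_dotProduct, smul_dotProduct,
        dotProduct_add, dotProduct_add,
        dotProduct_smul, dotProduct_smul, dotProduct_smul, dotProduct_smul,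
        hcross, hcross', hqS]
      have : v₁ ⬝ᵥ ((Aᵀ * A) *ᵥ v₁) = μ := by
        rw [hSv₁, dotProduct_smul, hv₁v₁, smul_eq_mul, mul_one]
      rw [this]
      simp [smul_eq_mul]; ring
    have hge : q ≤ eucNorm (A *ᵥ (a • v₁ + b • w)) ^ 2 := by
      rw [hsq]
      nlinarith [sq_nonneg a, sq_nonneg b]
    calc Real.sqrt q ≤ Real.sqrt (eucNorm (A *ᵥ (a • v₁ + b • w)) ^ 2) :=
          Real.sqrt_le_sqrt hge
      _ = eucNorm (A *ᵥ (a • v₁ + b • w)) := Real.sqrt_sq (eucNorm_nonneg _)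
  have hne : (innerSet A H).Nonempty :=
    ⟨eucNorm (A *ᵥ v₁), v₁, Submodule.subset_span (Set.mem_insert _ _), hv1, rfl⟩
  have hinf : Real.sqrt q ≤ sInf (innerSet A H) := le_csInf hne hbound
  have hsv2 : sInf (innerSet A H) ≤ singVal A 2 := by
    rw [singVal_eq]
    exact le_csSup (outerSet_bddAbove A 2) ⟨H, hrank, rfl⟩
  have hfinal : Real.sqrt q ≤ singVal A 2 := le_trans hinf hsv2
  calc q = Real.sqrt q ^ 2 := (Real.sq_sqrt hq0).symm
    _ ≤ (singVal A 2) ^ 2 := pow_le_pow_left₀ (Real.sqrt_nonneg _) hfinal 2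

lemma wedin_arith1 {g σ₂ s ε : ℝ} (hspos : 0 < s) (hgpos : 0 < g + σ₂)
    (hmain : g ^ 2 * s ^ 2 ≤ σ₂ ^ 2 * s ^ 2 + σ₂ * s * ε + ε * s * g) :
    (g - σ₂) * s ≤ ε := by
  nlinarith [mul_pos hspos hgpos, hmain]

lemma wedin_arith2 {σ₁ σ₂ g ε s : ℝ} (hweyl : σ₁ ≤ g + ε) (hQ : (g - σ₂) * s ≤ ε)
    (hs1 : s ≤ 1) (hε0 : 0 ≤ ε) (hspos : 0 < s) :
    s * (σ₁ - σ₂) ≤ 2 * ε := by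
  nlinarith [mul_le_mul_of_nonneg_right hweyl (le_of_lt hspos), hQ, hs1, hε0, hspos]


end WedinAux

open WedinAux in
/-- Wedin's `sin θ` theorem for the first singular vectors: there is an absolute constant
`C > 0` such that `sin ∠(v₁, v₁')` ≤ `C‖E‖/δ` where `δ = σ₁ - σ₂ > 0`. -/
theorem wedin_sin_theorem :
    ∃ C : ℝ, 0 < C ∧
      ∀ (n : ℕ) (A E : Matrix (Fin n) (Fin n) ℝ) (v₁ v₁' : Fin n → ℝ),
        IsUnitSingVec A (singVal A 1) v₁ →
        IsUnitSingVec (A + E) (singVal (A + E) 1) v₁' →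
        0 < singVal A 1 - singVal A 2 →
        sinAngle v₁ v₁' ≤ C * specNorm E / (singVal A 1 - singVal A 2) := by
  refine ⟨2, by norm_num, ?_⟩
  intro n A E v₁ v₁' h1 h2 hδ
  obtain ⟨hv1, hSv1⟩ := h1
  obtain ⟨hv1', hTv1'⟩ := h2
  set B : Matrix (Fin n) (Fin n) ℝ := A + E with hB
  set σ₁ : ℝ := singVal A 1 with hσ₁
  set σ₂ : ℝ := singVal A 2 with hσ₂
  set g : ℝ := singVal B 1 with hg
  set ε : ℝ := specNorm E with hε
  have hε0 : 0 ≤ ε := specNorm_nonneg E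
  have hσ20 : 0 ≤ σ₂ := singVal_nonneg A 2
  have hσ10 : 0 ≤ σ₁ := singVal_nonneg A 1
  have hg0 : 0 ≤ g := singVal_nonneg B 1
  have hv₁v₁ : v₁ ⬝ᵥ v₁ = 1 := by rw [← eucNorm_sq, hv1]; norm_num
  have hv₁'v₁' : v₁' ⬝ᵥ v₁' = 1 := by rw [← eucNorm_sq, hv1']; norm_num
  set c : ℝ := v₁ ⬝ᵥ v₁' with hc
  have hv₁'v₁ : v₁' ⬝ᵥ v₁ = c := by rw [dotProduct_comm]
  set w : Fin n → ℝ := v₁' - c • v₁ with hwdef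
  have hv₁'eq : v₁' = c • v₁ + w := by rw [hwdef]; abel
  have hv₁w : v₁ ⬝ᵥ w = 0 := by
    rw [hwdef, dotProduct_sub, dotProduct_smul, hv₁v₁, smul_eq_mul, mul_one, ← hc, sub_self]
  have hwv₁ : w ⬝ᵥ v₁ = 0 := by rw [dotProduct_comm]; exact hv₁w
  set s : ℝ := eucNorm w with hs
  have hs0 : 0 ≤ s := eucNorm_nonneg w
  have hww : w ⬝ᵥ w = s ^ 2 := (eucNorm_sq w).symm
  have hs2 : s ^ 2 = 1 - c ^ 2 := by
    rw [← hww, hwdef, dotProduct_sub, sub_dotProduct, sub_dotProduct,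
      dotProduct_smul, smul_dotProduct, smul_dotProduct, dotProduct_smul,
      hv₁v₁, hv₁'v₁', hv₁'v₁, ← hc]
    simp [smul_eq_mul]; ring
  have hsin : sinAngle v₁ v₁' = s := by
    have hdot : (∑ i, v₁ i * v₁' i) = c := rfl
    rw [sinAngle, hdot, ← hs2, Real.sqrt_sq hs0]
  have hs1 : s ≤ 1 := by nlinarith [sq_nonneg c]
  rw [hsin]
  by_cases hcase : σ₁ - σ₂ ≤ 2 * ε
  · calc s ≤ 1 := hs1
      _ ≤ 2 * ε / (σ₁ - σ₂) := (one_le_div hδ).mpr hcase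
  · push_neg at hcase
    -- Weyl: σ₁ ≤ g + ε
    have hweyl : σ₁ ≤ g + ε := by
      refine singVal_le (fun u hu => ?_) (by linarith)
      have hAu : A *ᵥ u = B *ᵥ u + (-1 : ℝ) • (E *ᵥ u) := by
        rw [hB, Matrix.add_mulVec]; module
      calc eucNorm (A *ᵥ u) = eucNorm (B *ᵥ u + (-1 : ℝ) • (E *ᵥ u)) := by rw [hAu]
        _ ≤ eucNorm (B *ᵥ u) + eucNorm ((-1 : ℝ) • (E *ᵥ u)) := eucNorm_add_le _ _
        _ = eucNorm (B *ᵥ u) + eucNorm (E *ᵥ u) := by rw [eucNorm_smul]; norm_num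
        _ ≤ g * eucNorm u + ε * eucNorm u :=
            add_le_add (mulVec_le_singVal_one B u) (mulVec_le_specNorm E u)
        _ = g + ε := by rw [hu]; ring
    by_cases hs00 : s = 0
    · rw [hs00]; positivity
    · have hspos : 0 < s := lt_of_le_of_ne hs0 (Ne.symm hs00)
      have hw0 : w ≠ 0 := by
        intro h
        exact hs00 (by rw [hs, h, eucNorm_zero])
      set wh : Fin n → ℝ := s⁻¹ • w with hwhdef
      have hwh1 : eucNorm wh = 1 := normalize_unit hw0
      have hwwh : w = s • wh := by
        rw [hwhdef, smul_inv_smul₀ (ne_of_gt hspos)]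
      have hv₁wh : v₁ ⬝ᵥ wh = 0 := by
        rw [hwhdef, dotProduct_smul, hv₁w, smul_zero]
      have hkey2 : (A *ᵥ wh) ⬝ᵥ (A *ᵥ wh) ≤ σ₂ ^ 2 :=
        dot_A_le_singVal_two A hv1 hSv1 hwh1 hv₁wh
      set q : ℝ := (A *ᵥ w) ⬝ᵥ (A *ᵥ w) with hq
      have hq0 : 0 ≤ q := by rw [hq, ← eucNorm_sq]; positivity
      have hqle : q ≤ σ₂ ^ 2 * s ^ 2 := by
        have hAsm : A *ᵥ w = s • (A *ᵥ wh) := by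
          conv_lhs => rw [hwwh]
          rw [Matrix.mulVec_smul]
        have : q = s ^ 2 * ((A *ᵥ wh) ⬝ᵥ (A *ᵥ wh)) := by
          rw [hq, hAsm, smul_dotProduct, dotProduct_smul]
          simp [smul_eq_mul]; ring
        rw [this]
        calc s ^ 2 * ((A *ᵥ wh) ⬝ᵥ (A *ᵥ wh)) ≤ s ^ 2 * σ₂ ^ 2 :=
              mul_le_mul_of_nonneg_left hkey2 (sq_nonneg s)
          _ = σ₂ ^ 2 * s ^ 2 := by ring
      have hAw : eucNorm (A *ᵥ w) ≤ σ₂ * s := by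
        have h2 : eucNorm (A *ᵥ w) ^ 2 ≤ (σ₂ * s) ^ 2 := by
          rw [eucNorm_sq, ← hq, mul_pow]; exact hqle
        calc eucNorm (A *ᵥ w) = Real.sqrt (eucNorm (A *ᵥ w) ^ 2) :=
              (Real.sqrt_sq (eucNorm_nonneg _)).symm
          _ ≤ Real.sqrt ((σ₂ * s) ^ 2) := Real.sqrt_le_sqrt h2
          _ = σ₂ * s := Real.sqrt_sq (by positivity)
      have hEw : eucNorm (E *ᵥ w) ≤ ε * s := by
        have := mulVec_le_specNorm E w
        rwa [← hs] at this
      have hEv' : eucNorm (E *ᵥ v₁') ≤ ε := by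
        have := mulVec_le_specNorm E v₁'
        rwa [hv1', mul_one] at this
      have hBv' : eucNorm (B *ᵥ v₁') = g := by
        have h2 : eucNorm (B *ᵥ v₁') ^ 2 = g ^ 2 := by
          rw [eucNorm_sq, dot_mulVec_self, hTv1', dotProduct_smul, hv₁'v₁', smul_eq_mul, mul_one]
        have h3 := congrArg Real.sqrt h2
        rwa [Real.sqrt_sq (eucNorm_nonneg _), Real.sqrt_sq hg0] at h3
      have hwv₁' : w ⬝ᵥ v₁' = s ^ 2 := by
        calc w ⬝ᵥ v₁' = w ⬝ᵥ (c • v₁ + w) := by rw [← hv₁'eq]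
          _ = s ^ 2 := by
              rw [dotProduct_add, dotProduct_smul, hwv₁, smul_zero, zero_add, hww]
      have hid1 : (B *ᵥ w) ⬝ᵥ (B *ᵥ v₁') = g ^ 2 * s ^ 2 := by
        rw [dot_mulVec_self, hTv1', dotProduct_smul, hwv₁', smul_eq_mul]
      have hid2 : (A *ᵥ w) ⬝ᵥ (A *ᵥ v₁') = q := by
        rw [dot_mulVec_self]
        calc w ⬝ᵥ ((Aᵀ * A) *ᵥ v₁') = w ⬝ᵥ ((Aᵀ * A) *ᵥ (c • v₁ + w)) := by rw [← hv₁'eq]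
          _ = q := by
              rw [Matrix.mulVec_add, Matrix.mulVec_smul, hSv1, dotProduct_add, dotProduct_smul,
                dotProduct_smul, hwv₁, smul_zero, smul_zero, zero_add, hq, dot_mulVec_self]
      have haddw : B *ᵥ w = A *ᵥ w + E *ᵥ w := by rw [hB, Matrix.add_mulVec]
      have haddv : B *ᵥ v₁' = A *ᵥ v₁' + E *ᵥ v₁' := by rw [hB, Matrix.add_mulVec]
      have hexpand : (B *ᵥ w) ⬝ᵥ (B *ᵥ v₁')
          = (A *ᵥ w) ⬝ᵥ (A *ᵥ v₁') + (A *ᵥ w) ⬝ᵥ (E *ᵥ v₁') + (E *ᵥ w) ⬝ᵥ (B *ᵥ v₁') := by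
        have hx : (A *ᵥ w) ⬝ᵥ (B *ᵥ v₁')
            = (A *ᵥ w) ⬝ᵥ (A *ᵥ v₁') + (A *ᵥ w) ⬝ᵥ (E *ᵥ v₁') := by
          rw [haddv, dotProduct_add]
        rw [haddw, add_dotProduct, hx]
      have hb1 : (A *ᵥ w) ⬝ᵥ (E *ᵥ v₁') ≤ σ₂ * s * ε := by
        calc (A *ᵥ w) ⬝ᵥ (E *ᵥ v₁') ≤ eucNorm (A *ᵥ w) * eucNorm (E *ᵥ v₁') :=
              dot_le_norm_mul_norm _ _
          _ ≤ (σ₂ * s) * ε :=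
              mul_le_mul hAw hEv' (eucNorm_nonneg _) (by positivity)
      have hb2 : (E *ᵥ w) ⬝ᵥ (B *ᵥ v₁') ≤ ε * s * g := by
        calc (E *ᵥ w) ⬝ᵥ (B *ᵥ v₁') ≤ eucNorm (E *ᵥ w) * eucNorm (B *ᵥ v₁') :=
              dot_le_norm_mul_norm _ _
          _ = eucNorm (E *ᵥ w) * g := by rw [hBv']
          _ ≤ (ε * s) * g := mul_le_mul_of_nonneg_right hEw hg0
      have hmain : g ^ 2 * s ^ 2 ≤ σ₂ ^ 2 * s ^ 2 + σ₂ * s * ε + ε * s * g := by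
        have h := hexpand
        rw [hid1, hid2] at h
        linarith [hqle, hb1, hb2]
      clear_value B σ₁ σ₂ g ε c w s wh q
      have hgpos : 0 < g + σ₂ := by linarith
      have hQ : (g - σ₂) * s ≤ ε := wedin_arith1 hspos hgpos hmain
      rw [le_div_iff₀ hδ]
      exact wedin_arith2 hweyl hQ hs1 hε0 hspos
end

section
/- For all constants β₁ > 0 and 0 < β₂ < 1 there is a constant C > 0 such that for every η > 0 there is n₀ with the following property for all n ≥ n₀. Let A be an n × n real matrix with singular values σ₁ ≥ … ≥ σₙ satisfying σ₁ ≤ n^{β₁}, with an orthonormal system of unit singular vectors v₁, …, vₙ (so AᵀA vᵢ = σᵢ² vᵢ), let d ≥ n^{1−β₂}, and let V := span{v₁, …, v_d}. Let E be an n × n random matrix with independent entries each equal to +1 or −1 with probability 1/2. Then with probability at least 1 − η, simultaneously for all unit vectors v ∈ V: ‖(A + E)v‖² ≤ Σ_{i=1}^{n} (v · vᵢ)² σᵢ² + C(n + σ₁ √(d log n)). -/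
open MeasureTheory ProbabilityTheory Matrix
open Metric Real Filter
open scoped ENNReal RealInnerProductSpace

section Helpers

instance {n : ℕ} : Coe (Fin n → ℝ) (EuclideanSpace ℝ (Fin n)) := ⟨WithLp.toLp 2⟩

def toE {n : ℕ} (x : Fin n → ℝ) : EuclideanSpace ℝ (Fin n) := x

lemma eucNorm_eq_norm {n : ℕ} (x : EuclideanSpace ℝ (Fin n)) : eucNorm x = ‖x‖ := by
  rw [EuclideanSpace.norm_eq]; simp [eucNorm, sq_abs]

lemma eucNorm_nonneg {n : ℕ} (x : Fin n → ℝ) : 0 ≤ eucNorm x := Real.sqrt_nonneg _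

lemma eucNorm_smul {n : ℕ} (c : ℝ) (x : Fin n → ℝ) : eucNorm (c • x) = |c| * eucNorm x := by
  unfold eucNorm
  rw [← Real.sqrt_sq_eq_abs, ← Real.sqrt_mul (sq_nonneg c), Finset.mul_sum]
  congr 1
  refine Finset.sum_congr rfl fun i _ => ?_
  simp [Pi.smul_apply, smul_eq_mul]
  ring

lemma eucNorm_eq_zero_iff {n : ℕ} (x : Fin n → ℝ) : eucNorm x = 0 ↔ x = 0 := by
  unfold eucNorm
  rw [show (0:ℝ) = Real.sqrt 0 by simp]
  rw [Real.sqrt_inj (Finset.sum_nonneg fun i _ => sq_nonneg _) le_rfl]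
  constructor
  · intro h
    funext i
    have := (Finset.sum_eq_zero_iff_of_nonneg (fun i _ => sq_nonneg (x i))).1 h i (Finset.mem_univ i)
    exact pow_eq_zero_iff (by norm_num) |>.1 this
  · intro h; simp [h]

/-- A global bound: for unit vectors, `eucNorm (M.mulVec x)` is at most the sum of
absolute values of entries of `M`. -/
lemma eucNorm_mulVec_le {n : ℕ} (M : Matrix (Fin n) (Fin n) ℝ) (x : Fin n → ℝ)
    (hx : eucNorm x = 1) :
    eucNorm (M.mulVec x) ≤ eucNorm (fun i => ∑ j, |M i j|) := by
  have hxj : ∀ j, |x j| ≤ 1 := by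
    intro j
    have h1 : (x j)^2 ≤ ∑ i, x i ^ 2 :=
      Finset.single_le_sum (fun i _ => sq_nonneg (x i)) (Finset.mem_univ j)
    have h2 : Real.sqrt ((x j)^2) ≤ Real.sqrt (∑ i, x i ^ 2) := Real.sqrt_le_sqrt h1
    unfold eucNorm at hx
    rwa [Real.sqrt_sq_eq_abs, hx] at h2
  unfold eucNorm
  apply Real.sqrt_le_sqrt
  refine Finset.sum_le_sum fun i _ => ?_
  show (M.mulVec x i) ^ 2 ≤ (∑ j, |M i j|) ^ 2
  have habs : |M.mulVec x i| ≤ ∑ j, |M i j| := by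
    calc |M.mulVec x i| = |∑ j, M i j * x j| := rfl
      _ ≤ ∑ j, |M i j * x j| := Finset.abs_sum_le_sum_abs _ _
      _ ≤ ∑ j, |M i j| := Finset.sum_le_sum fun j _ => by
          rw [abs_mul]
          exact mul_le_of_le_one_right (abs_nonneg _) (hxj j)
  exact sq_le_sq' (by linarith [neg_abs_le (M.mulVec x i)]) (by linarith [le_abs_self (M.mulVec x i)])

lemma le_singVal_one {n : ℕ} (M : Matrix (Fin n) (Fin n) ℝ) (x : Fin n → ℝ)
    (hx : eucNorm x = 1) : eucNorm (M.mulVec x) ≤ singVal M 1 := by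
  classical
  set K := eucNorm (fun i => ∑ j, |M i j|) with hK
  set 𝒳 := {r : ℝ | ∃ H : Submodule ℝ (Fin n → ℝ), Module.finrank ℝ H = 1 ∧
    r = sInf {y : ℝ | ∃ v ∈ H, eucNorm v = 1 ∧ y = eucNorm (M.mulVec v)}} with h𝒳
  have hbdd : BddAbove 𝒳 := by
    refine ⟨K, ?_⟩
    rintro r ⟨H, hH, rfl⟩
    have hHbot : H ≠ ⊥ := by
      intro h
      rw [h, finrank_bot] at hH
      norm_num at hH
    obtain ⟨h0, hh0m, hh0⟩ := Submodule.exists_mem_ne_zero_of_ne_bot hHbot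
    have hn0 : eucNorm h0 ≠ 0 := fun h => hh0 ((eucNorm_eq_zero_iff h0).1 h)
    have hn0' : 0 < eucNorm h0 := lt_of_le_of_ne (eucNorm_nonneg h0) (Ne.symm hn0)
    set w := (eucNorm h0)⁻¹ • h0 with hw
    have hwm : w ∈ H := H.smul_mem _ hh0m
    have hwn : eucNorm w = 1 := by
      rw [hw, eucNorm_smul, abs_of_pos (inv_pos.2 hn0'), inv_mul_cancel₀ hn0]
    refine csInf_le_of_le ⟨0, ?_⟩ ⟨w, hwm, hwn, rfl⟩ (eucNorm_mulVec_le M w hwn)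
    rintro y ⟨u, _, _, rfl⟩
    exact eucNorm_nonneg _
  have hx0 : x ≠ 0 := by
    intro h
    rw [h, (eucNorm_eq_zero_iff (0 : Fin n → ℝ)).2 rfl] at hx
    norm_num at hx
  have hmem : eucNorm (M.mulVec x) ∈ 𝒳 := by
    refine ⟨Submodule.span ℝ {x}, finrank_span_singleton hx0, ?_⟩
    have hset : {y : ℝ | ∃ v ∈ Submodule.span ℝ {x}, eucNorm v = 1 ∧ y = eucNorm (M.mulVec v)}
        = {eucNorm (M.mulVec x)} := by
      ext y
      constructor
      · rintro ⟨w, hwm, hwn, rfl⟩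
        obtain ⟨c, rfl⟩ := Submodule.mem_span_singleton.1 hwm
        have hc : |c| = 1 := by
          rw [eucNorm_smul, hx, mul_one] at hwn
          exact hwn
        rw [Matrix.mulVec_smul, eucNorm_smul, hc, one_mul]
        rfl
      · rintro rfl
        exact ⟨x, Submodule.mem_span_singleton_self x, hx, rfl⟩
    rw [hset, csInf_singleton]
  exact le_csSup hbdd hmem

lemma norm_sq_mulVec_eq {n : ℕ} (A : Matrix (Fin n) (Fin n) ℝ) (v : Fin n → Fin n → ℝ)
    (σ : Fin n → ℝ)
    (hov : ∀ i j : Fin n, ∑ l, v i l * v j l = if i = j then 1 else 0)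
    (heig : ∀ i : Fin n, (Aᵀ * A).mulVec (v i) = σ i • v i) (x : Fin n → ℝ) :
    ∑ i, (A.mulVec x i) ^ 2 = ∑ i, (∑ l, x l * v i l) ^ 2 * σ i := by
  classical
  set c : Fin n → ℝ := fun i => ∑ l, x l * v i l with hc
  -- orthonormal rows: P * Pᵀ = 1 hence Pᵀ * P = 1
  set P : Matrix (Fin n) (Fin n) ℝ := Matrix.of v with hP
  have hPPt : P * Pᵀ = 1 := by
    ext i j
    simp only [Matrix.mul_apply, Matrix.transpose_apply, Matrix.one_apply, hP, Matrix.of_apply]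
    exact hov i j
  have hPtP : Pᵀ * P = 1 := mul_eq_one_comm.1 hPPt
  have hcomp : ∀ l m : Fin n, ∑ i, v i l * v i m = if l = m then 1 else 0 := by
    intro l m
    have := congrFun (congrFun hPtP l) m
    simp only [Matrix.mul_apply, Matrix.transpose_apply, Matrix.one_apply, hP,
      Matrix.of_apply] at this
    convert this using 2
  have hx : x = ∑ i, c i • v i := by
    funext l
    rw [Finset.sum_apply]
    simp only [Pi.smul_apply, smul_eq_mul, hc]
    calc x l = ∑ m, x m * (if m = l then 1 else 0) := by
          simp only [mul_ite, mul_one, mul_zero]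
          rw [Finset.sum_ite_eq' Finset.univ l (fun m => x m)]
          simp
      _ = ∑ m, x m * ∑ i, v i m * v i l := by
          refine Finset.sum_congr rfl fun m _ => ?_
          rw [hcomp m l]
      _ = ∑ m, ∑ i, x m * (v i m * v i l) := by
          refine Finset.sum_congr rfl fun m _ => ?_
          rw [Finset.mul_sum]
      _ = ∑ i, ∑ m, x m * (v i m * v i l) := Finset.sum_comm
      _ = ∑ i, (∑ m, x m * v i m) * v i l := by
          refine Finset.sum_congr rfl fun i _ => ?_
          rw [Finset.sum_mul]
          refine Finset.sum_congr rfl fun m _ => ?_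
          ring
  have hquad : ∑ i, (A.mulVec x i) ^ 2 = x ⬝ᵥ ((Aᵀ * A).mulVec x) := by
    have h1 : ∑ i, (A.mulVec x i) ^ 2 = (A.mulVec x) ⬝ᵥ (A.mulVec x) := by
      simp [dotProduct, sq]
    rw [h1, ← Matrix.mulVec_mulVec, dotProduct_mulVec x Aᵀ, Matrix.vecMul_transpose]
  rw [hquad]
  have heigsum : (Aᵀ * A).mulVec x = ∑ i, (c i * σ i) • v i := by
    conv_lhs => rw [hx]
    rw [show (Aᵀ * A).mulVec (∑ i, c i • v i) = (Aᵀ * A).mulVecLin (∑ i, c i • v i) from rfl,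
      map_sum]
    refine Finset.sum_congr rfl fun i _ => ?_
    rw [LinearMap.map_smul]
    show c i • ((Aᵀ * A).mulVec (v i)) = _
    rw [heig i, smul_smul]
  rw [heigsum]
  have hds : x ⬝ᵥ ∑ i, (c i * σ i) • v i = ∑ i, (c i * σ i) * (x ⬝ᵥ v i) := by
    simp only [dotProduct, Finset.sum_apply, Pi.smul_apply, smul_eq_mul, Finset.mul_sum]
    rw [Finset.sum_comm]
    refine Finset.sum_congr rfl fun i _ => ?_
    refine Finset.sum_congr rfl fun m _ => ?_
    ring
  rw [hds]
  refine Finset.sum_congr rfl fun i _ => ?_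
  have : x ⬝ᵥ v i = c i := rfl
  rw [this]
  ring

lemma euc_inner_eq {n : ℕ} (x y : EuclideanSpace ℝ (Fin n)) : ⟪x, y⟫ = ∑ i, x i * y i := by
  simp [PiLp.inner_apply, mul_comm]

lemma euc_coord_le {n : ℕ} (x : EuclideanSpace ℝ (Fin n)) (i : Fin n) : |x i| ≤ ‖x‖ := by
  rw [EuclideanSpace.norm_eq]
  rw [← Real.sqrt_sq_eq_abs]
  apply Real.sqrt_le_sqrt
  exact Finset.single_le_sum (fun j _ => sq_nonneg ‖x j‖) (Finset.mem_univ i)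
    |>.trans_eq' (by simp [Real.norm_eq_abs, sq_abs])

/-- From a bound on net pairs to a bound on all unit vectors of the subspaces. -/
lemma net_to_sup {n : ℕ} (M : Matrix (Fin n) (Fin n) ℝ)
    (U V : Submodule ℝ (EuclideanSpace ℝ (Fin n)))
    (TU TV : Finset (EuclideanSpace ℝ (Fin n)))
    (hTU : ∀ y ∈ TU, y ∈ U ∧ ‖y‖ = 1) (hTV : ∀ z ∈ TV, z ∈ V ∧ ‖z‖ = 1)
    (coverU : ∀ u, u ∈ U → ‖u‖ = 1 → ∃ y ∈ TU, ‖u - y‖ ≤ 1/4)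
    (coverV : ∀ x, x ∈ V → ‖x‖ = 1 → ∃ z ∈ TV, ‖x - z‖ ≤ 1/4)
    (m : ℝ)
    (hm : ∀ y ∈ TU, ∀ z ∈ TV, ⟪y, (M.mulVec z : EuclideanSpace ℝ (Fin n))⟫ ≤ m) :
    ∀ u, u ∈ U → ‖u‖ = 1 → ∀ x, x ∈ V → ‖x‖ = 1 →
      ⟪u, (M.mulVec x : EuclideanSpace ℝ (Fin n))⟫ ≤ 2 * m := by
  intro u₀ hu₀U hu₀ x₀ hx₀V hx₀
  set 𝒜 : Set ℝ := {r | ∃ u, u ∈ U ∧ ‖u‖ = 1 ∧ ∃ x, x ∈ V ∧ ‖x‖ = 1 ∧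
    r = ⟪u, (M.mulVec x : EuclideanSpace ℝ (Fin n))⟫} with h𝒜
  have hbdd : BddAbove 𝒜 := by
    refine ⟨∑ i, ∑ j, |M i j|, ?_⟩
    rintro r ⟨u, hu, hun, x, hx, hxn, rfl⟩
    rw [euc_inner_eq]
    calc ∑ i, u i * (M.mulVec x : EuclideanSpace ℝ (Fin n)) i
        ≤ ∑ i, |u i * M.mulVec x i| := Finset.sum_le_sum fun i _ => le_abs_self _
      _ ≤ ∑ i, ∑ j, |M i j| := Finset.sum_le_sum fun i _ => ?_
    rw [abs_mul]
    calc |u i| * |M.mulVec x i| ≤ 1 * |M.mulVec x i| := by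
          have := euc_coord_le u i
          rw [hun] at this
          exact mul_le_mul_of_nonneg_right this (abs_nonneg _)
      _ = |∑ j, M i j * x j| := by rw [one_mul]; rfl
      _ ≤ ∑ j, |M i j * x j| := Finset.abs_sum_le_sum_abs _ _
      _ ≤ ∑ j, |M i j| := Finset.sum_le_sum fun j _ => by
          rw [abs_mul]
          have := euc_coord_le x j
          rw [hxn] at this
          exact mul_le_of_le_one_right (abs_nonneg _) this
  have hne : 𝒜.Nonempty := ⟨_, u₀, hu₀U, hu₀, x₀, hx₀V, hx₀, rfl⟩
  set S : ℝ := sSup 𝒜 with hSdef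
  have hmemS : ∀ u, u ∈ U → ‖u‖ = 1 → ∀ x, x ∈ V → ‖x‖ = 1 →
      ⟪u, (M.mulVec x : EuclideanSpace ℝ (Fin n))⟫ ≤ S :=
    fun u hu hun x hx hxn => le_csSup hbdd ⟨u, hu, hun, x, hx, hxn, rfl⟩
  have hS0 : 0 ≤ S := by
    have h1 := hmemS u₀ hu₀U hu₀ x₀ hx₀V hx₀
    have h2 := hmemS (-u₀) (U.neg_mem hu₀U) (by rw [norm_neg, hu₀]) x₀ hx₀V hx₀
    rw [inner_neg_left] at h2
    linarith
  -- every element is at most m + S/2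
  have hstep : ∀ u, u ∈ U → ‖u‖ = 1 → ∀ x, x ∈ V → ‖x‖ = 1 →
      ⟪u, (M.mulVec x : EuclideanSpace ℝ (Fin n))⟫ ≤ m + S/2 := by
    intro u hu hun x hx hxn
    obtain ⟨y, hyT, hy⟩ := coverU u hu hun
    obtain ⟨z, hzT, hz⟩ := coverV x hx hxn
    obtain ⟨hyU, hyn⟩ := hTU y hyT
    obtain ⟨hzV, hzn⟩ := hTV z hzT
    have hsplit : ⟪u, (M.mulVec x : EuclideanSpace ℝ (Fin n))⟫
        = ⟪y, (M.mulVec z : EuclideanSpace ℝ (Fin n))⟫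
          + ⟪u - y, (M.mulVec x : EuclideanSpace ℝ (Fin n))⟫
          + ⟪y, (M.mulVec x - M.mulVec z : EuclideanSpace ℝ (Fin n))⟫ := by
      rw [inner_sub_left, inner_sub_right]
      ring
    -- bound second term
    have hscale : ∀ w, w ∈ U → ‖w‖ ≤ 1/4 → ∀ x', x' ∈ V → ‖x'‖ = 1 →
        ⟪w, (M.mulVec x' : EuclideanSpace ℝ (Fin n))⟫ ≤ S/4 := by
      intro w hw hwn x' hx' hxn'
      rcases eq_or_ne w 0 with rfl | hw0
      · rw [inner_zero_left]
        linarith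
      · have hnw : 0 < ‖w‖ := norm_pos_iff.2 hw0
        have := hmemS (‖w‖⁻¹ • w) (U.smul_mem _ hw)
          (by rw [norm_smul, norm_inv, norm_norm, inv_mul_cancel₀ hnw.ne']) x' hx' hxn'
        rw [inner_smul_left, RCLike.conj_to_real] at this
        have h2 : ⟪w, (M.mulVec x' : EuclideanSpace ℝ (Fin n))⟫ ≤ ‖w‖ * S := by
          have h3 := mul_le_mul_of_nonneg_left this hnw.le
          rwa [← mul_assoc, mul_inv_cancel₀ hnw.ne', one_mul] at h3
        calc ⟪w, (M.mulVec x' : EuclideanSpace ℝ (Fin n))⟫ ≤ ‖w‖ * S := h2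
          _ ≤ (1/4) * S := mul_le_mul_of_nonneg_right hwn hS0
          _ = S/4 := by ring
    have h2nd : ⟪u - y, (M.mulVec x : EuclideanSpace ℝ (Fin n))⟫ ≤ S/4 :=
      hscale (u - y) (U.sub_mem hu hyU) hy x hx hxn
    -- bound third term : ⟪y, M (x-z)⟫ = ⟪M? ...⟫ ; use symmetry via the V-side scaling
    have h3rd : ⟪y, (M.mulVec x - M.mulVec z : EuclideanSpace ℝ (Fin n))⟫ ≤ S/4 := by
      have hmv : (M.mulVec x - M.mulVec z : EuclideanSpace ℝ (Fin n))
          = (M.mulVec (x - z) : EuclideanSpace ℝ (Fin n)) := by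
        rw [Matrix.mulVec_sub, WithLp.toLp_sub]
      rw [hmv]
      rcases eq_or_ne (x - z : EuclideanSpace ℝ (Fin n)) 0 with hxz | hxz
      · rw [show (M.mulVec (x - z) : EuclideanSpace ℝ (Fin n)) = 0 by
          rw [← WithLp.ofLp_sub, hxz, WithLp.ofLp_zero, Matrix.mulVec_zero, WithLp.toLp_zero]]
        rw [inner_zero_right]
        linarith
      · set w : EuclideanSpace ℝ (Fin n) := x - z with hwdef
        have hnw : 0 < ‖w‖ := norm_pos_iff.2 hxz
        have hwV : w ∈ V := V.sub_mem hx hzV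
        have hunit := hmemS y hyU hyn (‖w‖⁻¹ • w) (V.smul_mem _ hwV)
          (by rw [norm_smul, norm_inv, norm_norm, inv_mul_cancel₀ hnw.ne'])
        have hsm : (M.mulVec (‖w‖⁻¹ • w) : EuclideanSpace ℝ (Fin n))
            = ‖w‖⁻¹ • (M.mulVec w : EuclideanSpace ℝ (Fin n)) := by
          rw [Matrix.mulVec_smul, WithLp.toLp_smul]
        rw [WithLp.ofLp_smul] at hunit
        rw [hsm, inner_smul_right] at hunit
        have h2 : ⟪y, (M.mulVec w : EuclideanSpace ℝ (Fin n))⟫ ≤ ‖w‖ * S := by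
          have h3 := mul_le_mul_of_nonneg_left hunit hnw.le
          rwa [← mul_assoc, mul_inv_cancel₀ hnw.ne', one_mul] at h3
        calc ⟪y, (M.mulVec w : EuclideanSpace ℝ (Fin n))⟫ ≤ ‖w‖ * S := h2
          _ ≤ (1/4) * S := mul_le_mul_of_nonneg_right hz hS0
          _ = S/4 := by ring
    have h1st := hm y hyT z hzT
    rw [hsplit]
    linarith
  have hSle : S ≤ m + S/2 := by
    refine csSup_le hne ?_
    rintro r ⟨u, hu, hun, x, hx, hxn, rfl⟩
    exact hstep u hu hun x hx hxn
  have : S ≤ 2 * m := by linarith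
  exact (hmemS u₀ hu₀U hu₀ x₀ hx₀V hx₀).trans this

lemma net_sphere (D : ℕ) : ∃ T : Finset (EuclideanSpace ℝ (Fin D)),
    (∀ y ∈ T, ‖y‖ = 1) ∧ T.card ≤ 9 ^ D ∧
    ∀ x : EuclideanSpace ℝ (Fin D), ‖x‖ = 1 → ∃ y ∈ T, ‖x - y‖ ≤ 1/4 := by
  classical
  set S : Set (EuclideanSpace ℝ (Fin D)) := {x | ‖x‖ = 1} with hS
  set 𝒮 : Set (Set (EuclideanSpace ℝ (Fin D))) :=
    {s | s ⊆ S ∧ s.Pairwise (fun a b => 1/4 < dist a b)} with h𝒮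
  obtain ⟨m, hmx⟩ : ∃ m, Maximal (fun s => s ∈ 𝒮) m := by
    refine zorn_subset 𝒮 ?_
    intro c hc hchain
    refine ⟨⋃₀ c, ⟨?_, ?_⟩, fun s hs => Set.subset_sUnion_of_mem hs⟩
    · exact Set.sUnion_subset fun s hs => (hc hs).1
    · intro a ha b hb hab
      obtain ⟨sa, hsa, ha'⟩ := ha
      obtain ⟨sb, hsb, hb'⟩ := hb
      rcases hchain.total hsa hsb with h | h
      · exact (hc hsb).2 (h ha') hb' hab
      · exact (hc hsa).2 ha' (h hb') hab
  have hm𝒮 : m ∈ 𝒮 := hmx.1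
  have hmax : ∀ a ∈ 𝒮, m ⊆ a → a = m := fun a ha hma => (hmx.2 ha hma).antisymm hma
  -- cardinality bound for any finset inside m
  have key : ∀ t : Finset (EuclideanSpace ℝ (Fin D)), ↑t ⊆ m → t.card ≤ 9 ^ D := by
    intro t ht
    have hdisj : (↑t : Set (EuclideanSpace ℝ (Fin D))).PairwiseDisjoint
        (fun x => ball x (1/8)) := by
      intro a ha b hb hab
      refine ball_disjoint_ball ?_
      have := hm𝒮.2 (ht ha) (ht hb) hab
      linarith
    have hsum : ∑ x ∈ t, volume (ball x (1/8 : ℝ))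
        = volume (⋃ x ∈ t, ball x (1/8 : ℝ)) :=
      (measure_biUnion_finset hdisj (fun x _ => measurableSet_ball)).symm
    have hsub : (⋃ x ∈ t, ball x (1/8 : ℝ)) ⊆ ball (0 : EuclideanSpace ℝ (Fin D)) (9/8) := by
      intro z hz
      simp only [Set.mem_iUnion] at hz
      obtain ⟨x, hx, hz⟩ := hz
      have hx1 : ‖x‖ = 1 := hm𝒮.1 (ht hx)
      have : dist z x < 1/8 := mem_ball.1 hz
      have : dist z 0 < 9/8 := by
        calc dist z 0 ≤ dist z x + dist x 0 := dist_triangle _ _ _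
        _ < 1/8 + 1 := by rw [dist_zero_right, hx1]; linarith
        _ = 9/8 := by norm_num
      exact mem_ball.2 this
    have hball : ∀ x : EuclideanSpace ℝ (Fin D), volume (ball x (1/8 : ℝ))
        = ENNReal.ofReal ((1/8 : ℝ) ^ D) * volume (ball (0 : EuclideanSpace ℝ (Fin D)) 1) := by
      intro x
      rw [Measure.addHaar_ball_of_pos volume x (by norm_num : (0:ℝ) < 1/8),
        finrank_euclideanSpace_fin]
    have hball9 : volume (ball (0 : EuclideanSpace ℝ (Fin D)) (9/8 : ℝ))
        = ENNReal.ofReal ((9/8 : ℝ) ^ D) * volume (ball (0 : EuclideanSpace ℝ (Fin D)) 1) := by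
      rw [Measure.addHaar_ball_of_pos volume _ (by norm_num : (0:ℝ) < 9/8),
        finrank_euclideanSpace_fin]
    have hv0 : volume (ball (0 : EuclideanSpace ℝ (Fin D)) 1) ≠ 0 :=
      (measure_ball_pos volume _ one_pos).ne'
    have hvtop : volume (ball (0 : EuclideanSpace ℝ (Fin D)) 1) ≠ ⊤ :=
      measure_ball_lt_top.ne
    have hle : (t.card : ℝ≥0∞) * (ENNReal.ofReal ((1/8 : ℝ) ^ D))
        ≤ ENNReal.ofReal ((9/8 : ℝ) ^ D) := by
      have h1 : (t.card : ℝ≥0∞) * (ENNReal.ofReal ((1/8 : ℝ) ^ D)) *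
          volume (ball (0 : EuclideanSpace ℝ (Fin D)) 1)
          ≤ ENNReal.ofReal ((9/8 : ℝ) ^ D) * volume (ball (0 : EuclideanSpace ℝ (Fin D)) 1) := by
        calc (t.card : ℝ≥0∞) * (ENNReal.ofReal ((1/8 : ℝ) ^ D)) *
            volume (ball (0 : EuclideanSpace ℝ (Fin D)) 1)
            = ∑ x ∈ t, volume (ball x (1/8 : ℝ)) := by
              rw [Finset.sum_congr rfl (fun x _ => hball x), Finset.sum_const,
                nsmul_eq_mul, mul_assoc]
          _ = volume (⋃ x ∈ t, ball x (1/8 : ℝ)) := hsum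
          _ ≤ volume (ball (0 : EuclideanSpace ℝ (Fin D)) (9/8)) := measure_mono hsub
          _ = _ := hball9
      exact (ENNReal.mul_le_mul_iff_left hv0 hvtop).1 h1
    -- convert to real
    have hR : (t.card : ℝ) * (1/8 : ℝ) ^ D ≤ (9/8 : ℝ) ^ D := by
      have h2 := ENNReal.toReal_mono (by finiteness) hle
      rw [ENNReal.toReal_mul, ENNReal.toReal_ofReal (by positivity),
        ENNReal.toReal_ofReal (by positivity)] at h2
      simpa using h2
    have h9 : (t.card : ℝ) ≤ (9:ℝ) ^ D := by
      have h8 : (0:ℝ) < (1/8 : ℝ) ^ D := by positivity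
      have h98 : (9/8:ℝ)^D = 9^D * (1/8:ℝ)^D := by rw [← mul_pow]; norm_num
      nlinarith
    exact_mod_cast h9
  have hmfin : m.Finite := by
    by_contra hinf
    obtain ⟨t, hts, htcard⟩ := Set.Infinite.exists_subset_card_eq hinf (9^D+1)
    have := key t hts
    omega
  refine ⟨hmfin.toFinset, ?_, ?_, ?_⟩
  · intro y hy
    exact hm𝒮.1 (hmfin.mem_toFinset.1 hy)
  · exact key hmfin.toFinset (by simp)
  · intro x hx
    by_cases hxm : ∃ y ∈ m, dist x y ≤ 1/4
    · obtain ⟨y, hy, hxy⟩ := hxm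
      exact ⟨y, hmfin.mem_toFinset.2 hy, by rwa [← dist_eq_norm]⟩
    · push_neg at hxm
      exfalso
      have hxnotm : x ∉ m := fun hxm' => by
        have h0 := hxm x hxm'
        rw [dist_self] at h0
        linarith
      have : insert x m ∈ 𝒮 := by
        constructor
        · exact Set.insert_subset hx hm𝒮.1
        · intro a ha b hb hab
          rcases ha with rfl | ha
          · rcases hb with rfl | hb
            · exact absurd rfl hab
            · exact hxm b hb
          · rcases hb with rfl | hb
            · rw [dist_comm]; exact hxm a ha
            · exact hm𝒮.2 ha hb hab
      have := hmax _ this (Set.subset_insert _ _)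
      exact hxnotm (this ▸ Set.mem_insert x m)

lemma net_subspace {n : ℕ} (W : Submodule ℝ (EuclideanSpace ℝ (Fin n))) :
    ∃ T : Finset (EuclideanSpace ℝ (Fin n)),
      (∀ y ∈ T, y ∈ W ∧ ‖y‖ = 1) ∧ T.card ≤ 9 ^ (Module.finrank ℝ W) ∧
      ∀ x, x ∈ W → ‖x‖ = 1 → ∃ y ∈ T, ‖x - y‖ ≤ 1/4 := by
  classical
  obtain ⟨T0, hT0n, hT0c, hT0cov⟩ := net_sphere (Module.finrank ℝ W)
  set φ : W ≃ₗᵢ[ℝ] EuclideanSpace ℝ (Fin (Module.finrank ℝ W)) :=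
    (stdOrthonormalBasis ℝ W).repr with hφ
  refine ⟨T0.image (fun y => ((φ.symm y : W) : EuclideanSpace ℝ (Fin n))), ?_, ?_, ?_⟩
  · intro y hy
    obtain ⟨y0, hy0, rfl⟩ := Finset.mem_image.1 hy
    refine ⟨(φ.symm y0).2, ?_⟩
    rw [Submodule.norm_coe, φ.symm.norm_map, hT0n y0 hy0]
  · exact (Finset.card_image_le).trans hT0c
  · intro x hxW hx
    set w : W := ⟨x, hxW⟩ with hwdef
    have hwn : ‖w‖ = 1 := by rw [Submodule.coe_norm]; exact hx
    obtain ⟨y0, hy0, hy0c⟩ := hT0cov (φ w) (by rw [φ.norm_map]; exact hwn)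
    refine ⟨((φ.symm y0 : W) : EuclideanSpace ℝ (Fin n)), Finset.mem_image_of_mem _ hy0, ?_⟩
    have : x - ((φ.symm y0 : W) : EuclideanSpace ℝ (Fin n)) = ((w - φ.symm y0 : W) :
        EuclideanSpace ℝ (Fin n)) := by
      simp [hwdef]
    rw [this, Submodule.norm_coe, ← φ.norm_map, map_sub, φ.apply_symm_apply]
    exact hy0c

lemma rademacher_exp_integral {Ω : Type} [MeasurableSpace Ω] (μ : Measure Ω)
    [IsProbabilityMeasure μ] (X : Ω → ℝ) (hX : Measurable X)
    (h1 : μ {ω | X ω = 1} = 1/2) (h2 : μ {ω | X ω = -1} = 1/2) (s : ℝ) :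
    Integrable (fun ω => exp (s * X ω)) μ ∧
      ∫ ω, exp (s * X ω) ∂μ ≤ exp (s ^ 2 / 2) := by
  classical
  set S1 : Set Ω := {ω | X ω = 1} with hS1
  set S2 : Set Ω := {ω | X ω = -1} with hS2
  have hS1m : MeasurableSet S1 := hX (measurableSet_singleton 1)
  have hS2m : MeasurableSet S2 := hX (measurableSet_singleton (-1))
  have hdisj : Disjoint S1 S2 := by
    rw [Set.disjoint_left]
    intro ω hω1 hω2
    have h12 : (1 : ℝ) = -1 := (Set.mem_setOf_eq ▸ hω1).symm.trans hω2
    norm_num at h12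
  have hunion : μ (S1 ∪ S2) = 1 := by
    rw [measure_union hdisj hS2m, h1, h2, ENNReal.add_halves]
  have hnull : μ (S1 ∪ S2)ᶜ = 0 := by
    rw [measure_compl (hS1m.union hS2m) (measure_ne_top _ _), hunion, measure_univ, tsub_self]
  set g : Ω → ℝ := fun ω => S1.indicator (fun _ => exp s) ω + S2.indicator (fun _ => exp (-s)) ω
    with hg
  have hae : (fun ω => exp (s * X ω)) =ᵐ[μ] g := by
    rw [Filter.eventuallyEq_iff_exists_mem]
    refine ⟨S1 ∪ S2, ?_, ?_⟩
    · rw [mem_ae_iff, hnull]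
    · intro ω hω
      rcases hω with hω | hω
      · have hω2 : ω ∉ S2 := fun h => hdisj.ne_of_mem hω h rfl
        simp only [hg, Set.indicator_of_mem hω, Set.indicator_of_notMem hω2, add_zero]
        rw [show X ω = 1 from hω, mul_one]
      · have hω1 : ω ∉ S1 := fun h => (hdisj.symm).ne_of_mem hω h rfl
        simp only [hg, Set.indicator_of_mem hω, Set.indicator_of_notMem hω1, zero_add]
        rw [show X ω = -1 from hω]
        ring_nf
  have hgint : Integrable g μ :=
    ((integrable_const (exp s)).indicator hS1m).add ((integrable_const (exp (-s))).indicator hS2m)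
  have hint : Integrable (fun ω => exp (s * X ω)) μ := hgint.congr hae.symm
  have hval : ∫ ω, exp (s * X ω) ∂μ = (exp s + exp (-s)) / 2 := by
    rw [integral_congr_ae hae, hg]
    rw [integral_add ((integrable_const (exp s)).indicator hS1m)
      ((integrable_const (exp (-s))).indicator hS2m),
      integral_indicator_const _ hS1m, integral_indicator_const _ hS2m, measureReal_def,
      measureReal_def, h1, h2]
    have : ((1:ℝ≥0∞)/2).toReal = (1/2 : ℝ) := by norm_num
    rw [this]
    simp [smul_eq_mul]
    ring
  refine ⟨hint, ?_⟩
  rw [hval]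
  have : (exp s + exp (-s)) / 2 = Real.cosh s := by rw [Real.cosh_eq]
  rw [this]
  exact Real.cosh_le_exp_half_sq s


lemma bernoulli_tail {Ω : Type} [MeasurableSpace Ω] (μ : Measure Ω) [IsProbabilityMeasure μ]
    {n : ℕ} (E : Ω → Matrix (Fin n) (Fin n) ℝ) (hE : IsBernoulliMatrix μ E)
    (c : Fin n × Fin n → ℝ) (hc : ∑ p, c p ^ 2 ≤ 1) (a : ℝ) (ha : 0 ≤ a) :
    μ {ω | a ≤ ∑ p : Fin n × Fin n, c p * E ω p.1 p.2}
      ≤ ENNReal.ofReal (exp (-(a ^ 2) / 2)) := by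
  classical
  set X : Fin n × Fin n → Ω → ℝ := fun p ω => c p * E ω p.1 p.2 with hX
  have hmeas : ∀ p, Measurable (X p) := fun p => (hE.1 p.1 p.2).const_mul (c p)
  have hindep : iIndepFun X μ := by
    have := ProbabilityTheory.iIndepFun.comp hE.2.1 (fun p (x : ℝ) => c p * x)
      (fun p => measurable_const_mul (c p))
    exact this
  have hrad : ∀ p : Fin n × Fin n, ∀ s : ℝ,
      Integrable (fun ω => exp (s * X p ω)) μ ∧
      ∫ ω, exp (s * X p ω) ∂μ ≤ exp ((s * c p) ^ 2 / 2) := by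
    intro p s
    have h := rademacher_exp_integral μ (fun ω => E ω p.1 p.2) (hE.1 p.1 p.2)
      ((hE.2.2 p.1 p.2).1) ((hE.2.2 p.1 p.2).2) (s * c p)
    have heq : (fun ω => exp ((s * c p) * E ω p.1 p.2)) = fun ω => exp (s * X p ω) := by
      funext ω
      rw [hX]
      ring_nf
    rw [heq] at h
    exact h
  have hintsum : Integrable (fun ω => exp (a * (∑ p : Fin n × Fin n, X p) ω)) μ :=
    ProbabilityTheory.iIndepFun.integrable_exp_mul_sum hindep hmeas
      (fun p _ => (hrad p a).1)
  have hchern := ProbabilityTheory.measure_ge_le_exp_mul_mgf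
    (X := ∑ p : Fin n × Fin n, X p) (μ := μ) a ha hintsum
  have hmgf : mgf (∑ p : Fin n × Fin n, X p) μ a ≤ exp (a ^ 2 / 2 * ∑ p, c p ^ 2) := by
    rw [ProbabilityTheory.iIndepFun.mgf_sum hindep hmeas]
    calc ∏ p : Fin n × Fin n, mgf (X p) μ a
        ≤ ∏ p : Fin n × Fin n, exp ((a * c p) ^ 2 / 2) := by
          refine Finset.prod_le_prod (fun p _ => mgf_nonneg) (fun p _ => ?_)
          exact (hrad p a).2
      _ = exp (∑ p : Fin n × Fin n, (a * c p) ^ 2 / 2) := by rw [← Real.exp_sum]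
      _ = exp (a ^ 2 / 2 * ∑ p, c p ^ 2) := by
          congr 1
          rw [Finset.mul_sum]
          congr 1
          funext p
          ring
  have hfinal : (μ {ω | a ≤ ∑ p : Fin n × Fin n, c p * E ω p.1 p.2}).toReal
      ≤ exp (-(a ^ 2) / 2) := by
    have hset : {ω | a ≤ (∑ p : Fin n × Fin n, X p) ω}
        = {ω | a ≤ ∑ p : Fin n × Fin n, c p * E ω p.1 p.2} := by
      ext ω
      simp [Finset.sum_apply, hX]
    rw [← hset]
    refine hchern.trans ?_
    calc exp (-a * a) * mgf (∑ p : Fin n × Fin n, X p) μ a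
        ≤ exp (-a * a) * exp (a ^ 2 / 2 * ∑ p, c p ^ 2) := by
          exact mul_le_mul_of_nonneg_left hmgf (exp_pos _).le
      _ = exp (-a * a + a ^ 2 / 2 * ∑ p, c p ^ 2) := by rw [← Real.exp_add]
      _ ≤ exp (-(a ^ 2) / 2) := by
          apply Real.exp_le_exp.2
          nlinarith [sq_nonneg a]
  calc μ {ω | a ≤ ∑ p : Fin n × Fin n, c p * E ω p.1 p.2}
      = ENNReal.ofReal (μ {ω | a ≤ ∑ p : Fin n × Fin n, c p * E ω p.1 p.2}).toReal :=
        (ENNReal.ofReal_toReal (measure_ne_top _ _)).symm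
    _ ≤ ENNReal.ofReal (exp (-(a ^ 2) / 2)) := ENNReal.ofReal_le_ofReal hfinal

lemma inner_mulVec_expand {n : ℕ} (M : Matrix (Fin n) (Fin n) ℝ)
    (y z : EuclideanSpace ℝ (Fin n)) :
    ⟪y, (M.mulVec z : EuclideanSpace ℝ (Fin n))⟫
      = ∑ p : Fin n × Fin n, (y p.1 * z p.2) * M p.1 p.2 := by
  rw [show ⟪y, (M.mulVec z : EuclideanSpace ℝ (Fin n))⟫ = ∑ i, y i * (M.mulVec z) i by
    simp [PiLp.inner_apply, mul_comm]]
  rw [Fintype.sum_prod_type]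
  refine Finset.sum_congr rfl fun i _ => ?_
  rw [show (M.mulVec z) i = ∑ j, M i j * z j from rfl, Finset.mul_sum]
  refine Finset.sum_congr rfl fun j _ => ?_
  ring

lemma sum_sq_eq_one {n : ℕ} (y : EuclideanSpace ℝ (Fin n)) (hy : ‖y‖ = 1) :
    ∑ i, y i ^ 2 = 1 := by
  have h := EuclideanSpace.norm_eq y
  rw [hy] at h
  have h2 : Real.sqrt (∑ i, ‖y i‖ ^ 2) = 1 := h.symm
  have h3 : ∑ i, ‖y i‖ ^ 2 = 1 := Real.sqrt_eq_one.1 h2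
  simpa [Real.norm_eq_abs, sq_abs] using h3

lemma event_bound {Ω : Type} [MeasurableSpace Ω] (μ : Measure Ω) [IsProbabilityMeasure μ]
    {n : ℕ} (E : Ω → Matrix (Fin n) (Fin n) ℝ) (hE : IsBernoulliMatrix μ E)
    (N1 N2 : Finset (EuclideanSpace ℝ (Fin n)))
    (h1 : ∀ y ∈ N1, ‖y‖ = 1) (h2 : ∀ z ∈ N2, ‖z‖ = 1) (a : ℝ) (ha : 0 ≤ a) :
    μ {ω | ¬ ∀ y ∈ N1, ∀ z ∈ N2, ⟪y, ((E ω).mulVec z : EuclideanSpace ℝ (Fin n))⟫ ≤ a}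
      ≤ (N1.card : ℝ≥0∞) * N2.card * ENNReal.ofReal (exp (-(a ^ 2) / 2)) := by
  classical
  have hsub : {ω | ¬ ∀ y ∈ N1, ∀ z ∈ N2, ⟪y, ((E ω).mulVec z : EuclideanSpace ℝ (Fin n))⟫ ≤ a}
      ⊆ ⋃ y ∈ N1, ⋃ z ∈ N2,
        {ω | a ≤ ∑ p : Fin n × Fin n, (y p.1 * z p.2) * E ω p.1 p.2} := by
    intro ω hω
    simp only [Set.mem_setOf_eq, not_forall] at hω
    obtain ⟨y, hy, z, hz, hgt⟩ := hω
    push_neg at hgt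
    simp only [Set.mem_iUnion]
    refine ⟨y, hy, z, hz, ?_⟩
    rw [Set.mem_setOf_eq, ← inner_mulVec_expand]
    exact hgt.le
  refine (measure_mono hsub).trans ?_
  refine (measure_biUnion_finset_le N1 _).trans ?_
  have hinner : ∀ y ∈ N1,
      μ (⋃ z ∈ N2, {ω | a ≤ ∑ p : Fin n × Fin n, (y p.1 * z p.2) * E ω p.1 p.2})
        ≤ (N2.card : ℝ≥0∞) * ENNReal.ofReal (exp (-(a ^ 2) / 2)) := by
    intro y hy
    refine (measure_biUnion_finset_le N2 _).trans ?_
    have heach : ∀ z ∈ N2,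
        μ {ω | a ≤ ∑ p : Fin n × Fin n, (y p.1 * z p.2) * E ω p.1 p.2}
          ≤ ENNReal.ofReal (exp (-(a ^ 2) / 2)) := by
      intro z hz
      refine bernoulli_tail μ E hE (fun p => y p.1 * z p.2) ?_ a ha
      have : ∑ p : Fin n × Fin n, (y p.1 * z p.2) ^ 2
          = (∑ i, y i ^ 2) * (∑ j, z j ^ 2) := by
        rw [Fintype.sum_prod_type, Finset.sum_mul]
        refine Finset.sum_congr rfl fun i _ => ?_
        rw [Finset.mul_sum]
        refine Finset.sum_congr rfl fun j _ => ?_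
        ring
      rw [this, sum_sq_eq_one y (h1 y hy), sum_sq_eq_one z (h2 z hz), one_mul]
    calc ∑ z ∈ N2, μ {ω | a ≤ ∑ p : Fin n × Fin n, (y p.1 * z p.2) * E ω p.1 p.2}
        ≤ ∑ _z ∈ N2, ENNReal.ofReal (exp (-(a ^ 2) / 2)) := Finset.sum_le_sum heach
      _ = (N2.card : ℝ≥0∞) * ENNReal.ofReal (exp (-(a ^ 2) / 2)) := by
          rw [Finset.sum_const, nsmul_eq_mul]
  calc ∑ y ∈ N1, μ (⋃ z ∈ N2, {ω | a ≤ ∑ p : Fin n × Fin n, (y p.1 * z p.2) * E ω p.1 p.2})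
      ≤ ∑ _y ∈ N1, (N2.card : ℝ≥0∞) * ENNReal.ofReal (exp (-(a ^ 2) / 2)) :=
        Finset.sum_le_sum hinner
    _ = (N1.card : ℝ≥0∞) * N2.card * ENNReal.ofReal (exp (-(a ^ 2) / 2)) := by
        rw [Finset.sum_const, nsmul_eq_mul, mul_assoc]

lemma card_exp_bound (c1 c2 k : ℕ) (h1 : c1 ≤ 9 ^ k) (h2 : c2 ≤ 9 ^ k) :
    (c1 : ℝ) * c2 * Real.exp (-((4 * Real.sqrt k) ^ 2) / 2) ≤ Real.exp (-2 * k) := by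
  have h9 : (9 : ℝ) ≤ Real.exp 3 := by
    have h27 : (2.7182818283 : ℝ) < Real.exp 1 := Real.exp_one_gt_d9
    have h3 : Real.exp 3 = (Real.exp 1) ^ 3 := by
      rw [← Real.exp_nat_mul]; norm_num
    rw [h3]
    calc (9 : ℝ) ≤ 2.7 ^ 3 := by norm_num
      _ ≤ (Real.exp 1) ^ 3 := by
          apply pow_le_pow_left₀ (by norm_num)
          linarith
  have hsq : (4 * Real.sqrt k) ^ 2 = 16 * k := by
    rw [mul_pow, Real.sq_sqrt (Nat.cast_nonneg k)]
    ring
  rw [hsq]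
  have hc1 : (c1 : ℝ) ≤ Real.exp (3 * k) := by
    calc (c1 : ℝ) ≤ (9 : ℝ) ^ k := by exact_mod_cast h1
      _ ≤ (Real.exp 3) ^ k := pow_le_pow_left₀ (by norm_num) h9 k
      _ = Real.exp (3 * k) := by rw [← Real.exp_nat_mul, mul_comm]
  have hc2 : (c2 : ℝ) ≤ Real.exp (3 * k) := by
    calc (c2 : ℝ) ≤ (9 : ℝ) ^ k := by exact_mod_cast h2
      _ ≤ (Real.exp 3) ^ k := pow_le_pow_left₀ (by norm_num) h9 k
      _ = Real.exp (3 * k) := by rw [← Real.exp_nat_mul, mul_comm]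
  calc (c1 : ℝ) * c2 * Real.exp (-(16 * k) / 2)
      ≤ Real.exp (3 * k) * Real.exp (3 * k) * Real.exp (-(16 * k) / 2) := by
        apply mul_le_mul_of_nonneg_right _ (Real.exp_pos _).le
        exact mul_le_mul hc1 hc2 (Nat.cast_nonneg c2) (Real.exp_pos _).le
    _ = Real.exp (3 * k + 3 * k + -(16 * k) / 2) := by rw [← Real.exp_add, ← Real.exp_add]
    _ = Real.exp (-2 * k) := by congr 1; ring

lemma enn_card_mul (k1 k2 : ℕ) {r : ℝ} (hr : 0 ≤ r) :
    (k1 : ℝ≥0∞) * k2 * ENNReal.ofReal r = ENNReal.ofReal ((k1 : ℝ) * k2 * r) := by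
  rw [ENNReal.ofReal_mul (by positivity), ENNReal.ofReal_mul (by positivity),
    ENNReal.ofReal_natCast, ENNReal.ofReal_natCast]

end Helpers

set_option maxHeartbeats 1600000 in
/-- Key lemma (Lemma 2.6): for constants `β₁ > 0`, `0 < β₂ < 1` there is `C` such that if
`σ₁ ≤ n^β₁`, `V = span{v₁, …, v_d}` with `d ≥ n^(1-β₂)`, and `E` is a random Bernoulli
matrix, then with probability at least `1 - η`, simultaneously for all unit `v ∈ V`:
`‖(A+E)v‖² ≤ ∑ᵢ (v·vᵢ)² σᵢ² + C(n + σ₁√(d log n))`. -/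
theorem key_subspace_lemma (β₁ β₂ : ℝ) (hβ₁ : 0 < β₁) (hβ₂0 : 0 < β₂) (hβ₂1 : β₂ < 1) :
    ∃ C : ℝ, 0 < C ∧ ∀ η : ℝ, 0 < η → ∃ n₀ : ℕ, ∀ n ≥ n₀,
      ∀ (A : Matrix (Fin n) (Fin n) ℝ) (v : Fin n → Fin n → ℝ) (d : ℕ)
        (Ω : Type) [MeasurableSpace Ω] (μ : Measure Ω) [IsProbabilityMeasure μ]
        (E : Ω → Matrix (Fin n) (Fin n) ℝ),
        (∀ i j : Fin n, ∑ l, v i l * v j l = if i = j then 1 else 0) →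
        (∀ i : Fin n, (Aᵀ * A).mulVec (v i) = singVal A (i.val + 1) ^ 2 • v i) →
        singVal A 1 ≤ (n : ℝ) ^ β₁ →
        (n : ℝ) ^ (1 - β₂) ≤ (d : ℝ) →
        IsBernoulliMatrix μ E →
        μ {ω | ∀ x : Fin n → ℝ,
              x ∈ Submodule.span ℝ {y : Fin n → ℝ | ∃ i : Fin n, i.val < d ∧ y = v i} →
              eucNorm x = 1 →
              eucNorm ((A + E ω).mulVec x) ^ 2 ≤
                (∑ i, (∑ l, x l * v i l) ^ 2 * singVal A (i.val + 1) ^ 2) +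
                  C * (n + singVal A 1 * Real.sqrt (d * Real.log n))}
          ≥ 1 - ENNReal.ofReal η := by
  classical
  refine ⟨64, by norm_num, ?_⟩
  intro η hη
  -- choose n₀ via a tail estimate
  have htt : Tendsto (fun n : ℕ => 2 * Real.exp (-2 * (n : ℝ) ^ (1 - β₂))) atTop (nhds 0) := by
    have h1 : Tendsto (fun x : ℝ => x ^ (1 - β₂)) atTop atTop :=
      tendsto_rpow_atTop (by linarith)
    have h2 : Tendsto (fun n : ℕ => (n : ℝ) ^ (1 - β₂)) atTop atTop :=
      h1.comp tendsto_natCast_atTop_atTop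
    have h3 : Tendsto (fun n : ℕ => -2 * (n : ℝ) ^ (1 - β₂)) atTop atBot := by
      have h4 : Tendsto (fun n : ℕ => (2 : ℝ) * (n : ℝ) ^ (1 - β₂)) atTop atTop :=
        h2.const_mul_atTop (by norm_num)
      have h5 : (fun n : ℕ => -2 * (n : ℝ) ^ (1 - β₂))
          = fun n : ℕ => -((2 : ℝ) * (n : ℝ) ^ (1 - β₂)) := by funext n; ring
      rw [h5]
      exact tendsto_neg_atBot_iff.2 h4
    have h6 : Tendsto (fun n : ℕ => Real.exp (-2 * (n : ℝ) ^ (1 - β₂))) atTop (nhds 0) :=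
      Real.tendsto_exp_atBot.comp h3
    have h7 := h6.const_mul (2 : ℝ)
    simpa using h7
  obtain ⟨N, hN⟩ := Filter.eventually_atTop.1 (htt.eventually_lt_const hη)
  refine ⟨max N 3, ?_⟩
  intro n hn A v d Ω _ μ _ E hov heig hσ hd hE
  have hn3 : 3 ≤ n := le_trans (le_max_right N 3) hn
  have hnN : N ≤ n := le_trans (le_max_left N 3) hn
  have hn0 : 0 < n := by omega
  have hnR : (3 : ℝ) ≤ (n : ℝ) := by exact_mod_cast hn3
  have hlog : 1 ≤ Real.log n := by
    rw [Real.le_log_iff_exp_le (by positivity)]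
    calc Real.exp 1 ≤ 2.7182818286 := Real.exp_one_lt_d9.le
      _ ≤ (n : ℝ) := by linarith
  have hd0 : 0 < d := by
    have hp : (0 : ℝ) < (n : ℝ) ^ (1 - β₂) :=
      Real.rpow_pos_of_pos (by exact_mod_cast hn0) _
    have : (0 : ℝ) < (d : ℝ) := lt_of_lt_of_le hp hd
    exact_mod_cast this
  set d' : ℕ := min d n with hd'def
  have hd'le_d : d' ≤ d := min_le_left _ _
  have hd'le_n : d' ≤ n := min_le_right _ _
  have hd'ge : (n : ℝ) ^ (1 - β₂) ≤ (d' : ℝ) := by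
    have h1 : (n : ℝ) ^ (1 - β₂) ≤ (n : ℝ) := by
      calc (n : ℝ) ^ (1 - β₂) ≤ (n : ℝ) ^ (1 : ℝ) :=
            Real.rpow_le_rpow_of_exponent_le (by linarith) (by linarith)
        _ = (n : ℝ) := Real.rpow_one _
    have hcast : ((min d n : ℕ) : ℝ) = min (d : ℝ) (n : ℝ) := by
      rcases le_total d n with h | h
      · rw [min_eq_left h, min_eq_left (by exact_mod_cast h : (d:ℝ) ≤ n)]
      · rw [min_eq_right h, min_eq_right (by exact_mod_cast h : (n:ℝ) ≤ d)]
    rw [hd'def, hcast]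
    exact le_min hd h1
  -- subspaces in Euclidean space
  set Vsub : Submodule ℝ (EuclideanSpace ℝ (Fin n)) :=
    Submodule.span ℝ {y : EuclideanSpace ℝ (Fin n) | ∃ i : Fin n, i.val < d ∧ y = v i}
    with hVsub
  set LA : EuclideanSpace ℝ (Fin n) →ₗ[ℝ] EuclideanSpace ℝ (Fin n) := Matrix.toEuclideanLin A
    with hLA
  set Usub : Submodule ℝ (EuclideanSpace ℝ (Fin n)) := Vsub.map LA with hUsub
  -- finrank bounds
  have hDV : Module.finrank ℝ Vsub ≤ d' := by
    set vE : Fin n → EuclideanSpace ℝ (Fin n) := fun i => v i with hvE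
    set F : Finset (Fin n) := Finset.univ.filter (fun i : Fin n => i.val < d) with hF
    have himg : {y : EuclideanSpace ℝ (Fin n) | ∃ i : Fin n, i.val < d ∧ y = v i}
        = (↑(F.image vE) : Set (EuclideanSpace ℝ (Fin n))) := by
      ext y
      constructor
      · rintro ⟨i, hi, rfl⟩
        exact Finset.mem_coe.2 (Finset.mem_image_of_mem _ (by simp [hF, hi]))
      · intro hy
        obtain ⟨i, hi, rfl⟩ := Finset.mem_image.1 (Finset.mem_coe.1 hy)
        exact ⟨i, (Finset.mem_filter.1 hi).2, rfl⟩
    have h1 : Module.finrank ℝ Vsub ≤ (F.image vE).card := by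
      rw [hVsub, himg]
      exact finrank_span_finset_le_card _
    have h2 : (F.image vE).card ≤ F.card :=
      Finset.card_image_le
    have h3 : F.card ≤ d' := by
      refine le_min ?_ ?_
      · have hinj : ∀ i ∈ F, ∀ j ∈ F, (⟨i.val % d, Nat.mod_lt _ hd0⟩ : Fin d)
            = ⟨j.val % d, Nat.mod_lt _ hd0⟩ → i = j := by
          intro i hi j hj hij
          rw [hF, Finset.mem_filter] at hi hj
          have h4 : i.val % d = j.val % d := congrArg Fin.val hij
          rw [Nat.mod_eq_of_lt hi.2, Nat.mod_eq_of_lt hj.2] at h4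
          exact Fin.ext h4
        have := Finset.card_le_card_of_injOn
          (fun i : Fin n => (⟨i.val % d, Nat.mod_lt _ hd0⟩ : Fin d))
          (fun i _ => Finset.mem_univ _) hinj
        simpa using this
      · calc F.card ≤ (Finset.univ : Finset (Fin n)).card := Finset.card_le_univ _
          _ = n := Finset.card_univ.trans (Fintype.card_fin n)
    omega
  have hDU : Module.finrank ℝ Usub ≤ d' :=
    le_trans (Submodule.finrank_map_le LA Vsub) hDV
  have hfrT : Module.finrank ℝ (⊤ : Submodule ℝ (EuclideanSpace ℝ (Fin n))) = n := by
    rw [finrank_top]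
    exact finrank_euclideanSpace_fin
  -- nets
  obtain ⟨NT, hNTm, hNTc, hNTcov⟩ :=
    net_subspace (⊤ : Submodule ℝ (EuclideanSpace ℝ (Fin n)))
  obtain ⟨NV, hNVm, hNVc, hNVcov⟩ := net_subspace Vsub
  obtain ⟨NU, hNUm, hNUc, hNUcov⟩ := net_subspace Usub
  have hNTc' : NT.card ≤ 9 ^ n := by rwa [hfrT] at hNTc
  have hNVcd : NV.card ≤ 9 ^ d' := le_trans hNVc (Nat.pow_le_pow_right (by norm_num) hDV)
  have hNVcn : NV.card ≤ 9 ^ n :=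
    le_trans hNVcd (Nat.pow_le_pow_right (by norm_num) hd'le_n)
  have hNUc' : NU.card ≤ 9 ^ d' := le_trans hNUc (Nat.pow_le_pow_right (by norm_num) hDU)
  set a1 : ℝ := 4 * Real.sqrt n with ha1def
  set a2 : ℝ := 4 * Real.sqrt d' with ha2def
  have ha1 : 0 ≤ a1 := by positivity
  have ha2 : 0 ≤ a2 := by positivity
  set G1 : Set Ω := {ω | ∀ y ∈ NT, ∀ z ∈ NV,
    ⟪y, (((E ω).mulVec z : Fin n → ℝ) : EuclideanSpace ℝ (Fin n))⟫ ≤ a1} with hG1def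
  set G2 : Set Ω := {ω | ∀ y ∈ NU, ∀ z ∈ NV,
    ⟪y, (((E ω).mulVec z : Fin n → ℝ) : EuclideanSpace ℝ (Fin n))⟫ ≤ a2} with hG2def
  have hG1 : μ G1ᶜ ≤ ENNReal.ofReal (Real.exp (-2 * n)) := by
    have hb := event_bound μ E hE NT NV (fun y hy => (hNTm y hy).2)
      (fun z hz => (hNVm z hz).2) a1 ha1
    have hcompl : G1ᶜ = {ω | ¬ ∀ y ∈ NT, ∀ z ∈ NV,
        ⟪y, (((E ω).mulVec z : Fin n → ℝ) : EuclideanSpace ℝ (Fin n))⟫ ≤ a1} := by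
      rw [hG1def, Set.compl_setOf]
    rw [hcompl]
    refine hb.trans ?_
    calc (NT.card : ℝ≥0∞) * NV.card * ENNReal.ofReal (Real.exp (-(a1 ^ 2) / 2))
        = ENNReal.ofReal ((NT.card : ℝ) * NV.card * Real.exp (-(a1 ^ 2) / 2)) :=
          enn_card_mul _ _ (Real.exp_pos _).le
      _ ≤ ENNReal.ofReal (Real.exp (-2 * n)) := by
          exact ENNReal.ofReal_le_ofReal (card_exp_bound NT.card NV.card n hNTc' hNVcn)
  have hG2 : μ G2ᶜ ≤ ENNReal.ofReal (Real.exp (-2 * d')) := by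
    have hb := event_bound μ E hE NU NV (fun y hy => (hNUm y hy).2)
      (fun z hz => (hNVm z hz).2) a2 ha2
    have hcompl : G2ᶜ = {ω | ¬ ∀ y ∈ NU, ∀ z ∈ NV,
        ⟪y, (((E ω).mulVec z : Fin n → ℝ) : EuclideanSpace ℝ (Fin n))⟫ ≤ a2} := by
      rw [hG2def, Set.compl_setOf]
    rw [hcompl]
    refine hb.trans ?_
    calc (NU.card : ℝ≥0∞) * NV.card * ENNReal.ofReal (Real.exp (-(a2 ^ 2) / 2))
        = ENNReal.ofReal ((NU.card : ℝ) * NV.card * Real.exp (-(a2 ^ 2) / 2)) :=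
          enn_card_mul _ _ (Real.exp_pos _).le
      _ ≤ ENNReal.ofReal (Real.exp (-2 * d')) := by
          exact ENNReal.ofReal_le_ofReal (card_exp_bound NU.card NV.card d' hNUc' hNVcd)
  -- deterministic part: on the good event, the bound holds
  have hsub : G1 ∩ G2 ⊆ {ω | ∀ x : Fin n → ℝ,
      x ∈ Submodule.span ℝ {y : Fin n → ℝ | ∃ i : Fin n, i.val < d ∧ y = v i} →
      eucNorm x = 1 →
      eucNorm ((A + E ω).mulVec x) ^ 2 ≤
        (∑ i, (∑ l, x l * v i l) ^ 2 * singVal A (i.val + 1) ^ 2) +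
          64 * (n + singVal A 1 * Real.sqrt (d * Real.log n))} := by
    rintro ω ⟨hω1, hω2⟩
    intro x hxspan hxnorm
    have hxV : toE x ∈ Vsub := by
      set f : (Fin n → ℝ) →ₗ[ℝ] EuclideanSpace ℝ (Fin n) :=
        ((WithLp.linearEquiv 2 ℝ (Fin n → ℝ)).symm : (Fin n → ℝ) →ₗ[ℝ] EuclideanSpace ℝ (Fin n))
      have := Submodule.apply_mem_span_image_of_mem_span f hxspan
      have hset : {y : EuclideanSpace ℝ (Fin n) | ∃ i : Fin n, i.val < d ∧ y = v i}
          = f '' {y : Fin n → ℝ | ∃ i : Fin n, i.val < d ∧ y = v i} := by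
        ext y
        constructor
        · rintro ⟨i, hi, rfl⟩
          exact ⟨v i, ⟨i, hi, rfl⟩, rfl⟩
        · rintro ⟨_, ⟨i, hi, rfl⟩, rfl⟩
          exact ⟨i, hi, rfl⟩
      rw [hVsub, hset]
      exact this
    have hx1 : ‖toE x‖ = 1 := by
      have h := eucNorm_eq_norm (toE x)
      rw [← h]
      exact hxnorm
    have s1 := net_to_sup (E ω) ⊤ Vsub NT NV hNTm hNVm hNTcov hNVcov a1 hω1
    have s2 := net_to_sup (E ω) Usub Vsub NU NV hNUm hNVm hNUcov hNVcov a2 hω2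
    have hWdef : ((E ω).mulVec (toE x) : EuclideanSpace ℝ (Fin n)) = toE ((E ω).mulVec x) := rfl
    have hEx : ‖toE ((E ω).mulVec x)‖ ≤ 2 * a1 := by
      rcases eq_or_ne (toE ((E ω).mulVec x)) 0 with h0 | h0
      · rw [h0, norm_zero]
        positivity
      · have hnw : 0 < ‖toE ((E ω).mulVec x)‖ := norm_pos_iff.2 h0
        have hu := s1 (‖toE ((E ω).mulVec x)‖⁻¹ • toE ((E ω).mulVec x)) Submodule.mem_top
          (by rw [norm_smul, norm_inv, norm_norm, inv_mul_cancel₀ hnw.ne']) (toE x) hxV hx1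
        rw [hWdef, inner_smul_left, RCLike.conj_to_real] at hu
        have hww : ⟪toE ((E ω).mulVec x), toE ((E ω).mulVec x)⟫
            = ‖toE ((E ω).mulVec x)‖ ^ 2 := real_inner_self_eq_norm_sq _
        rw [hww] at hu
        have hcalc : ‖toE ((E ω).mulVec x)‖⁻¹ * ‖toE ((E ω).mulVec x)‖ ^ 2
            = ‖toE ((E ω).mulVec x)‖ := by
          field_simp
        rwa [hcalc] at hu
    have hAx_le : ‖toE (A.mulVec x)‖ ≤ singVal A 1 := by
      have h := eucNorm_eq_norm (toE (A.mulVec x))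
      rw [← h]
      exact le_singVal_one A x hxnorm
    have hσ1 : 0 ≤ singVal A 1 :=
      le_trans (eucNorm_nonneg (A.mulVec x)) (le_singVal_one A x hxnorm)
    have hAmem : toE (A.mulVec x) ∈ Usub := ⟨toE x, hxV, rfl⟩
    have hcross : ⟪toE (A.mulVec x), toE ((E ω).mulVec x)⟫ ≤ singVal A 1 * (2 * a2) := by
      rcases eq_or_ne (toE (A.mulVec x)) 0 with h0 | h0
      · rw [h0, inner_zero_left]
        exact mul_nonneg hσ1 (by positivity)
      · have hnAx : 0 < ‖toE (A.mulVec x)‖ := norm_pos_iff.2 h0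
        have hu := s2 (‖toE (A.mulVec x)‖⁻¹ • toE (A.mulVec x)) (Usub.smul_mem _ hAmem)
          (by rw [norm_smul, norm_inv, norm_norm, inv_mul_cancel₀ hnAx.ne']) (toE x) hxV hx1
        rw [hWdef, inner_smul_left, RCLike.conj_to_real] at hu
        have h2 : ⟪toE (A.mulVec x), toE ((E ω).mulVec x)⟫
            ≤ ‖toE (A.mulVec x)‖ * (2 * a2) := by
          have h3 := mul_le_mul_of_nonneg_left hu hnAx.le
          rw [← mul_assoc, mul_inv_cancel₀ hnAx.ne', one_mul] at h3
          exact h3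
        exact h2.trans (mul_le_mul_of_nonneg_right hAx_le (by positivity))
    have hexp : eucNorm ((A + E ω).mulVec x) ^ 2
        = ‖toE (A.mulVec x)‖ ^ 2 + 2 * ⟪toE (A.mulVec x), toE ((E ω).mulVec x)⟫
          + ‖toE ((E ω).mulVec x)‖ ^ 2 := by
      have hconv : eucNorm ((A + E ω).mulVec x) = ‖toE ((A + E ω).mulVec x)‖ :=
        eucNorm_eq_norm (toE ((A + E ω).mulVec x))
      rw [hconv]
      have hadd : toE ((A + E ω).mulVec x) = toE (A.mulVec x) + toE ((E ω).mulVec x) := by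
        rw [toE, toE, toE, Matrix.add_mulVec, WithLp.toLp_add]
      rw [hadd]
      exact norm_add_sq_real _ _
    have hspec : ‖toE (A.mulVec x)‖ ^ 2
        = ∑ i, (∑ l, x l * v i l) ^ 2 * singVal A (i.val + 1) ^ 2 := by
      have hconv : eucNorm (A.mulVec x) = ‖toE (A.mulVec x)‖ := eucNorm_eq_norm (toE (A.mulVec x))
      rw [← hconv]
      have h1 : eucNorm (A.mulVec x) ^ 2 = ∑ i, (A.mulVec x i) ^ 2 :=
        Real.sq_sqrt (Finset.sum_nonneg fun i _ => sq_nonneg _)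
      rw [h1]
      exact norm_sq_mulVec_eq A v (fun i => singVal A (i.val + 1) ^ 2) hov heig x
    have hsqd : Real.sqrt (d' : ℝ) ≤ Real.sqrt (d * Real.log n) := by
      apply Real.sqrt_le_sqrt
      calc (d' : ℝ) ≤ (d : ℝ) := by exact_mod_cast hd'le_d
        _ ≤ d * Real.log n := le_mul_of_one_le_right (Nat.cast_nonneg d) hlog
    have hterm : singVal A 1 * Real.sqrt (d' : ℝ) ≤ singVal A 1 * Real.sqrt (d * Real.log n) :=
      mul_le_mul_of_nonneg_left hsqd hσ1
    have hnonneg : 0 ≤ singVal A 1 * Real.sqrt (d * Real.log n) := mul_nonneg hσ1 (Real.sqrt_nonneg _)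
    have hwsq : ‖toE ((E ω).mulVec x)‖ ^ 2 ≤ (2 * a1) ^ 2 :=
      sq_le_sq' (by linarith [norm_nonneg (toE ((E ω).mulVec x))]) hEx
    have h2a1 : (2 * a1) ^ 2 = 64 * n := by
      have ha1sq : a1 ^ 2 = 16 * n := by
        rw [ha1def, mul_pow, Real.sq_sqrt (Nat.cast_nonneg n)]
        ring
      rw [mul_pow, ha1sq]
      ring
    have hre : singVal A 1 * (2 * a2) = 8 * (singVal A 1 * Real.sqrt (d' : ℝ)) := by
      rw [ha2def]
      ring
    rw [hexp, hspec]
    linarith [hcross, hre, hterm, hnonneg, hwsq, h2a1]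
  -- probability conclusion
  have hbad : μ G1ᶜ + μ G2ᶜ ≤ ENNReal.ofReal η := by
    refine (add_le_add hG1 hG2).trans ?_
    rw [← ENNReal.ofReal_add (Real.exp_pos _).le (Real.exp_pos _).le]
    apply ENNReal.ofReal_le_ofReal
    have h1 : Real.exp (-2 * n) ≤ Real.exp (-2 * (n : ℝ) ^ (1 - β₂)) := by
      apply Real.exp_le_exp.2
      have h2 : (n : ℝ) ^ (1 - β₂) ≤ (n : ℝ) := le_trans hd'ge (by exact_mod_cast hd'le_n)
      linarith
    have h2 : Real.exp (-2 * d') ≤ Real.exp (-2 * (n : ℝ) ^ (1 - β₂)) := by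
      apply Real.exp_le_exp.2
      linarith [hd'ge]
    have h3 := hN n hnN
    linarith
  rw [ge_iff_le, tsub_le_iff_right]
  calc (1 : ℝ≥0∞) = μ Set.univ := measure_univ.symm
    _ ≤ μ ((G1 ∩ G2) ∪ (G1ᶜ ∪ G2ᶜ)) := by
        apply measure_mono
        intro ω _
        by_cases h1 : ω ∈ G1
        · by_cases h2 : ω ∈ G2
          · exact Or.inl ⟨h1, h2⟩
          · exact Or.inr (Or.inr h2)
        · exact Or.inr (Or.inl h1)
    _ ≤ μ (G1 ∩ G2) + μ (G1ᶜ ∪ G2ᶜ) := measure_union_le _ _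
    _ ≤ μ (G1 ∩ G2) + (μ G1ᶜ + μ G2ᶜ) := add_le_add_right (measure_union_le _ _) _
    _ ≤ μ {ω | ∀ x : Fin n → ℝ,
          x ∈ Submodule.span ℝ {y : Fin n → ℝ | ∃ i : Fin n, i.val < d ∧ y = v i} →
          eucNorm x = 1 →
          eucNorm ((A + E ω).mulVec x) ^ 2 ≤
            (∑ i, (∑ l, x l * v i l) ^ 2 * singVal A (i.val + 1) ^ 2) +
              64 * (n + singVal A 1 * Real.sqrt (d * Real.log n))} + ENNReal.ofReal η :=
        add_le_add (measure_mono hsub) hbad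
end

section
/- For all positive constants α₁, α₂ there is a positive constant C such that for every η > 0 there is n₀ with the following property for all n ≥ n₀. Let A be an n × n real matrix of rank r ≤ n^{1−α₁} whose largest singular value satisfies σ₁ ≤ n^{α₂} and whose gap δ := σ₁ − σ₂ is positive, and let E be an n × n random matrix with independent entries each equal to +1 or −1 with probability 1/2. Write a unit singular vector v₁′ of A + E corresponding to its largest singular value as v₁′ = w + c₀u, where w is the orthogonal projection of v₁′ onto the span of the right singular vectors v₁, …, v_r of A (equivalently, onto the row space of A), u is a unit vector orthogonal to that span, and c₀ ≥ 0. Then with probability at least 1 − η, c₀² ≤ C √n / σ₁. -/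
open MeasureTheory ProbabilityTheory Matrix

open Metric Set
open scoped ENNReal NNReal

namespace OCB

variable {n : ℕ}

noncomputable def toE (v : Fin n → ℝ) : EuclideanSpace ℝ (Fin n) :=
  (WithLp.equiv 2 (Fin n → ℝ)).symm v

lemma eucNorm_eq_norm (v : Fin n → ℝ) : eucNorm v = ‖toE v‖ := by
  rw [EuclideanSpace.norm_eq]
  unfold eucNorm
  congr 1
  refine Finset.sum_congr rfl fun i _ => ?_
  rw [Real.norm_eq_abs, sq_abs]
  rfl

lemma toE_add (v w : Fin n → ℝ) : toE (v + w) = toE v + toE w := rfl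
lemma toE_smul (a : ℝ) (v : Fin n → ℝ) : toE (a • v) = a • toE v := rfl
lemma toE_zero : toE (0 : Fin n → ℝ) = 0 := rfl
lemma toE_neg (v : Fin n → ℝ) : toE (-v) = -toE v := rfl

lemma eucNorm_nonneg (v : Fin n → ℝ) : 0 ≤ eucNorm v := Real.sqrt_nonneg _

lemma eucNorm_sq (v : Fin n → ℝ) : eucNorm v ^ 2 = ∑ i, v i ^ 2 :=
  Real.sq_sqrt (Finset.sum_nonneg fun i _ => sq_nonneg _)

lemma eucNorm_add_le (v w : Fin n → ℝ) : eucNorm (v + w) ≤ eucNorm v + eucNorm w := by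
  rw [eucNorm_eq_norm, eucNorm_eq_norm, eucNorm_eq_norm, toE_add]; exact norm_add_le _ _

lemma eucNorm_smul (a : ℝ) (v : Fin n → ℝ) : eucNorm (a • v) = |a| * eucNorm v := by
  rw [eucNorm_eq_norm, eucNorm_eq_norm, toE_smul, norm_smul, Real.norm_eq_abs]

lemma eucNorm_pos {v : Fin n → ℝ} (hv : v ≠ 0) : 0 < eucNorm v := by
  rw [eucNorm_eq_norm]
  apply norm_pos_iff.2
  simpa [toE] using hv

end OCB

namespace OCB

noncomputable def frob {n : ℕ} (M : Matrix (Fin n) (Fin n) ℝ) : ℝ :=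
  Real.sqrt (∑ i, ∑ j, M i j ^ 2)

lemma mulVec_frob_bound (M : Matrix (Fin n) (Fin n) ℝ) (v : Fin n → ℝ) :
    eucNorm (M.mulVec v) ≤ frob M * eucNorm v := by
  have h1 : ∀ i, (M.mulVec v i) ^ 2 ≤ (∑ j, M i j ^ 2) * ∑ j, v j ^ 2 := by
    intro i
    have := Finset.sum_mul_sq_le_sq_mul_sq Finset.univ (fun j => M i j) v
    simpa [Matrix.mulVec, dotProduct] using this
  have h2 : ∑ i, (M.mulVec v i) ^ 2 ≤ (∑ i, ∑ j, M i j ^ 2) * ∑ j, v j ^ 2 := by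
    calc ∑ i, (M.mulVec v i) ^ 2 ≤ ∑ i, (∑ j, M i j ^ 2) * ∑ j, v j ^ 2 :=
          Finset.sum_le_sum fun i _ => h1 i
      _ = (∑ i, ∑ j, M i j ^ 2) * ∑ j, v j ^ 2 := by rw [Finset.sum_mul]
  unfold eucNorm frob
  calc Real.sqrt (∑ i, (M.mulVec v) i ^ 2) ≤
      Real.sqrt ((∑ i, ∑ j, M i j ^ 2) * ∑ j, v j ^ 2) := Real.sqrt_le_sqrt h2
    _ = _ := Real.sqrt_mul (Finset.sum_nonneg fun i _ => Finset.sum_nonneg fun j _ => sq_nonneg _) _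

lemma exists_unit_of_finrank_pos {H : Submodule ℝ (Fin n → ℝ)} {k : ℕ}
    (hk : Module.finrank ℝ H = k) (hpos : 0 < k) : ∃ v ∈ H, eucNorm v = 1 := by
  have hbot : H ≠ ⊥ := by
    intro h
    rw [h] at hk
    rw [finrank_bot] at hk
    omega
  obtain ⟨x, hxH, hx0⟩ := Submodule.exists_mem_ne_zero_of_ne_bot hbot
  refine ⟨(eucNorm x)⁻¹ • x, H.smul_mem _ hxH, ?_⟩
  rw [eucNorm_smul, abs_inv, abs_of_nonneg (eucNorm_nonneg x)]
  field_simp [(eucNorm_pos hx0).ne']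

lemma singVal_nonneg (M : Matrix (Fin n) (Fin n) ℝ) (k : ℕ) : 0 ≤ singVal M k := by
  apply Real.sSup_nonneg
  rintro x ⟨H, hH, rfl⟩
  apply Real.sInf_nonneg
  rintro y ⟨v, hv, hv1, rfl⟩
  exact eucNorm_nonneg _

lemma eucNorm_le_singVal (M : Matrix (Fin n) (Fin n) ℝ) {v : Fin n → ℝ}
    (hv : eucNorm v = 1) : eucNorm (M.mulVec v) ≤ singVal M 1 := by
  have hv0 : v ≠ 0 := by
    intro h; rw [h] at hv; simp [eucNorm] at hv
  set H : Submodule ℝ (Fin n → ℝ) := Submodule.span ℝ {v} with hHdef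
  have hrank : Module.finrank ℝ H = 1 := finrank_span_singleton hv0
  have hset : {y : ℝ | ∃ w ∈ H, eucNorm w = 1 ∧ y = eucNorm (M.mulVec w)}
      = {eucNorm (M.mulVec v)} := by
    ext y
    constructor
    · rintro ⟨w, hwH, hw1, rfl⟩
      obtain ⟨a, rfl⟩ := Submodule.mem_span_singleton.1 hwH
      rw [eucNorm_smul, hv, mul_one] at hw1
      rw [Matrix.mulVec_smul, eucNorm_smul, hw1, one_mul]
      exact Set.mem_singleton _
    · rintro rfl
      exact ⟨v, Submodule.mem_span_singleton_self v, hv, rfl⟩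
  have hmem : eucNorm (M.mulVec v) ∈
      {x : ℝ | ∃ H : Submodule ℝ (Fin n → ℝ), Module.finrank ℝ H = 1 ∧
        x = sInf {y : ℝ | ∃ w ∈ H, eucNorm w = 1 ∧ y = eucNorm (M.mulVec w)}} := by
    exact ⟨H, hrank, by rw [hset, csInf_singleton]⟩
  apply le_csSup _ hmem
  refine ⟨frob M, ?_⟩
  rintro x ⟨H', hH', rfl⟩
  obtain ⟨w, hwH', hw1⟩ := exists_unit_of_finrank_pos hH' one_pos
  have hmem' : eucNorm (M.mulVec w) ∈
      {y : ℝ | ∃ u ∈ H', eucNorm u = 1 ∧ y = eucNorm (M.mulVec u)} := ⟨w, hwH', hw1, rfl⟩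
  calc sInf {y : ℝ | ∃ u ∈ H', eucNorm u = 1 ∧ y = eucNorm (M.mulVec u)}
      ≤ eucNorm (M.mulVec w) := csInf_le ⟨0, fun y ⟨u, _, _, hy⟩ => hy ▸ eucNorm_nonneg _⟩ hmem'
    _ ≤ frob M * 1 := by rw [← hw1]; exact mulVec_frob_bound M w
    _ = frob M := mul_one _

lemma mulVec_le_singVal (M : Matrix (Fin n) (Fin n) ℝ) (w : Fin n → ℝ) :
    eucNorm (M.mulVec w) ≤ singVal M 1 * eucNorm w := by
  rcases eq_or_ne w 0 with rfl | hw0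
  · simp [Matrix.mulVec_zero, eucNorm, singVal_nonneg]
  · have hpos := eucNorm_pos hw0
    have hunit : eucNorm ((eucNorm w)⁻¹ • w) = 1 := by
      rw [eucNorm_smul, abs_inv, abs_of_nonneg (eucNorm_nonneg w)]
      field_simp
    have := eucNorm_le_singVal M hunit
    rw [Matrix.mulVec_smul, eucNorm_smul, abs_inv, abs_of_nonneg (eucNorm_nonneg w)] at this
    rw [inv_mul_le_iff₀ hpos] at this
    linarith [this]

end OCB

namespace OCB

noncomputable def mulVecLM (M : Matrix (Fin n) (Fin n) ℝ) :
    EuclideanSpace ℝ (Fin n) →ₗ[ℝ] EuclideanSpace ℝ (Fin n) where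
  toFun x := toE (M.mulVec x)
  map_add' x y := by
    show toE (M.mulVec (x + y)) = _
    rw [Matrix.mulVec_add, toE_add]
  map_smul' a x := by
    show toE (M.mulVec (a • x)) = _
    rw [Matrix.mulVec_smul, toE_smul]
    rfl

lemma exists_max_unit (hn : 0 < n) (M : Matrix (Fin n) (Fin n) ℝ) :
    ∃ v : Fin n → ℝ, eucNorm v = 1 ∧ singVal M 1 ≤ eucNorm (M.mulVec v) := by
  have hcont : Continuous fun x : EuclideanSpace ℝ (Fin n) => ‖mulVecLM M x‖ :=
    ((mulVecLM M).continuous_of_finiteDimensional).norm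
  have hsph : (Metric.sphere (0 : EuclideanSpace ℝ (Fin n)) 1).Nonempty := by
    refine ⟨EuclideanSpace.single ⟨0, hn⟩ 1, ?_⟩
    simp [EuclideanSpace.norm_single]
  obtain ⟨x, hxS, hmax'⟩ := (isCompact_sphere (0 : EuclideanSpace ℝ (Fin n)) 1).exists_isMaxOn
    hsph hcont.continuousOn
  have hmax : ∀ y ∈ Metric.sphere (0 : EuclideanSpace ℝ (Fin n)) 1,
      ‖mulVecLM M y‖ ≤ ‖mulVecLM M x‖ := fun y hy => hmax' hy
  have hx1 : eucNorm (x : Fin n → ℝ) = 1 := by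
    have : ‖x‖ = 1 := by simpa using hxS
    rw [eucNorm_eq_norm]; exact this
  refine ⟨x, hx1, ?_⟩
  have key : ∀ w : Fin n → ℝ, eucNorm w = 1 → eucNorm (M.mulVec w) ≤ eucNorm (M.mulVec x) := by
    intro w hw
    have hwS : toE w ∈ Metric.sphere (0 : EuclideanSpace ℝ (Fin n)) 1 := by
      simp [mem_sphere_iff_norm, ← eucNorm_eq_norm, hw]
    have := hmax (toE w) hwS
    rw [eucNorm_eq_norm, eucNorm_eq_norm]
    exact this
  apply Real.sSup_le _ (eucNorm_nonneg _)
  rintro y ⟨H, hH, rfl⟩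
  obtain ⟨w, hwH, hw1⟩ := exists_unit_of_finrank_pos hH one_pos
  calc sInf {y : ℝ | ∃ u ∈ H, eucNorm u = 1 ∧ y = eucNorm (M.mulVec u)}
      ≤ eucNorm (M.mulVec w) :=
        csInf_le ⟨0, fun y ⟨u, _, _, hy⟩ => hy ▸ eucNorm_nonneg _⟩ ⟨w, hwH, hw1, rfl⟩
    _ ≤ eucNorm (M.mulVec x) := key w hw1

end OCB

namespace OCB

lemma dotp_self (v : Fin n → ℝ) : v ⬝ᵥ v = eucNorm v ^ 2 := by
  rw [eucNorm_sq]
  simp [dotProduct, pow_two]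

lemma eucNorm_neg (v : Fin n → ℝ) : eucNorm (-v) = eucNorm v := by
  rw [eucNorm_eq_norm, eucNorm_eq_norm, toE_neg, norm_neg]

lemma eucNorm_mulVec_of_singvec {M : Matrix (Fin n) (Fin n) ℝ} {s : ℝ} {v : Fin n → ℝ}
    (hs : 0 ≤ s) (h : IsUnitSingVec M s v) : eucNorm (M.mulVec v) = s := by
  have h1 : v ⬝ᵥ ((Mᵀ * M).mulVec v) = s ^ 2 * (v ⬝ᵥ v) := by
    rw [h.2]; simp [dotProduct_smul]
  rw [← Matrix.mulVec_mulVec, Matrix.dotProduct_mulVec, Matrix.vecMul_transpose] at h1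
  rw [dotp_self, dotp_self, h.1] at h1
  have h2 : eucNorm (M.mulVec v) ^ 2 = s ^ 2 := by rw [h1]; ring
  calc eucNorm (M.mulVec v) = Real.sqrt (eucNorm (M.mulVec v) ^ 2) :=
        (Real.sqrt_sq (eucNorm_nonneg _)).symm
    _ = Real.sqrt (s ^ 2) := by rw [h2]
    _ = s := Real.sqrt_sq hs

lemma deterministic_bound {n : ℕ} (hn : 0 < n) (A E₀ : Matrix (Fin n) (Fin n) ℝ)
    (hgap : 0 < singVal A 1 - singVal A 2)
    (hEop : ∀ v : Fin n → ℝ, eucNorm v = 1 → eucNorm (E₀.mulVec v) ≤ 8 * Real.sqrt n) :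
    ∀ (v₁' w u : Fin n → ℝ) (c₀ : ℝ),
      IsUnitSingVec (A + E₀) (singVal (A + E₀) 1) v₁' →
      w ∈ Submodule.span ℝ (Set.range fun i : Fin n => A i) →
      eucNorm u = 1 →
      (∀ x ∈ Submodule.span ℝ (Set.range fun i : Fin n => A i), ∑ l, u l * x l = 0) →
      0 ≤ c₀ →
      v₁' = w + c₀ • u →
      c₀ ^ 2 ≤ 32 * Real.sqrt n / singVal A 1 := by
  intro v₁' w u c₀ h1 h2 h3 h4 h5 h6
  have hσpos : 0 < singVal A 1 := by linarith [singVal_nonneg A 2]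
  set σ₁ := singVal A 1 with hσ₁
  set s := singVal (A + E₀) 1 with hsdef
  have hs0 : 0 ≤ s := singVal_nonneg _ 1
  -- s = ‖(A+E₀)v₁'‖
  have hseq : eucNorm ((A + E₀).mulVec v₁') = s := eucNorm_mulVec_of_singvec hs0 h1
  -- lower bound on s
  obtain ⟨v₁, hv₁u, hv₁max⟩ := exists_max_unit hn A
  have hlow : σ₁ - 8 * Real.sqrt n ≤ s := by
    have h1' : eucNorm ((A + E₀).mulVec v₁) ≤ s := eucNorm_le_singVal _ hv₁u
    have h2' : eucNorm (A.mulVec v₁) ≤ eucNorm ((A + E₀).mulVec v₁) + eucNorm (E₀.mulVec v₁) := by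
      have : A.mulVec v₁ = (A + E₀).mulVec v₁ + -(E₀.mulVec v₁) := by
        rw [Matrix.add_mulVec]; abel
      calc eucNorm (A.mulVec v₁) = eucNorm ((A + E₀).mulVec v₁ + -(E₀.mulVec v₁)) := by rw [← this]
        _ ≤ eucNorm ((A + E₀).mulVec v₁) + eucNorm (-(E₀.mulVec v₁)) := eucNorm_add_le _ _
        _ = eucNorm ((A + E₀).mulVec v₁) + eucNorm (E₀.mulVec v₁) := by rw [eucNorm_neg]
    have h3' := hEop v₁ hv₁u
    linarith
  -- orthogonal decomposition
  have huw : ∑ l, u l * w l = 0 := h4 w h2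
  have hu2 : ∑ i, u i ^ 2 = 1 := by rw [← eucNorm_sq, h3]; norm_num
  have hdecomp : eucNorm w ^ 2 + c₀ ^ 2 = 1 := by
    have hv1 : eucNorm v₁' ^ 2 = 1 := by rw [h1.1]; norm_num
    rw [eucNorm_sq] at hv1 ⊢
    have hexp : ∀ i, v₁' i ^ 2 = w i ^ 2 + 2 * c₀ * (u i * w i) + c₀ ^ 2 * u i ^ 2 := by
      intro i
      rw [h6]
      simp only [Pi.add_apply, Pi.smul_apply, smul_eq_mul]
      ring
    rw [Finset.sum_congr rfl fun i _ => hexp i] at hv1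
    rw [Finset.sum_add_distrib, Finset.sum_add_distrib, ← Finset.mul_sum, ← Finset.mul_sum] at hv1
    rw [huw, hu2] at hv1
    linarith
  have hwle : eucNorm w ≤ 1 := by nlinarith [eucNorm_nonneg w, sq_nonneg c₀]
  -- A u = 0
  have hAu : A.mulVec u = 0 := by
    funext i
    have hAi : (A i) ∈ Submodule.span ℝ (Set.range fun i : Fin n => A i) :=
      Submodule.subset_span ⟨i, rfl⟩
    have := h4 (A i) hAi
    simp only [Matrix.mulVec, dotProduct, Pi.zero_apply]
    rw [← this]
    exact Finset.sum_congr rfl fun l _ => mul_comm _ _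
  -- upper bound on s
  have hup : s ≤ σ₁ * eucNorm w + 8 * Real.sqrt n := by
    have hAv : A.mulVec v₁' = A.mulVec w := by
      rw [h6, Matrix.mulVec_add, Matrix.mulVec_smul, hAu, smul_zero, add_zero]
    have htri : eucNorm ((A + E₀).mulVec v₁')
        ≤ eucNorm (A.mulVec v₁') + eucNorm (E₀.mulVec v₁') := by
      rw [Matrix.add_mulVec]; exact eucNorm_add_le _ _
    have hAw : eucNorm (A.mulVec w) ≤ σ₁ * eucNorm w := mulVec_le_singVal A w
    have hEv : eucNorm (E₀.mulVec v₁') ≤ 8 * Real.sqrt n := hEop v₁' h1.1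
    rw [← hseq]
    rw [hAv] at htri
    linarith
  -- conclude
  have hkey : σ₁ * (1 - eucNorm w) ≤ 16 * Real.sqrt n := by nlinarith
  rw [le_div_iff₀ hσpos]
  nlinarith [mul_le_mul_of_nonneg_left hkey
      (show (0:ℝ) ≤ 1 + eucNorm w by linarith [eucNorm_nonneg w]),
    Real.sqrt_nonneg (n:ℝ), eucNorm_nonneg w]

end OCB

namespace OCB

variable {n : ℕ}

local notation "E" n => EuclideanSpace ℝ (Fin n)

/-- Any (1/4)-separated finset in the unit ball has cardinality at most `9 ^ n`. -/
lemma card_le_of_separated (s : Finset (EuclideanSpace ℝ (Fin n)))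
    (hs : ∀ c ∈ s, ‖c‖ ≤ 1)
    (h : ∀ c ∈ s, ∀ d ∈ s, c ≠ d → 1/4 ≤ ‖c - d‖) : s.card ≤ 9 ^ n := by
  let μ : Measure (EuclideanSpace ℝ (Fin n)) := volume
  let δ : ℝ := 1 / 8
  let ρ : ℝ := 9 / 8
  have ρpos : 0 < ρ := by norm_num
  have δpos : 0 < δ := by norm_num
  set A := ⋃ c ∈ s, ball (c : EuclideanSpace ℝ (Fin n)) δ with hA
  have D : Set.Pairwise (s : Set (EuclideanSpace ℝ (Fin n)))
      (Function.onFun Disjoint fun c => ball (c : EuclideanSpace ℝ (Fin n)) δ) := by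
    rintro c hc d hd hcd
    apply ball_disjoint_ball
    rw [dist_eq_norm]
    have := h c hc d hd hcd
    calc δ + δ = 1/4 := by norm_num
      _ ≤ ‖c - d‖ := this
  have A_subset : A ⊆ ball (0 : EuclideanSpace ℝ (Fin n)) ρ := by
    refine iUnion₂_subset fun x hx => ?_
    apply ball_subset_ball'
    calc δ + dist x 0 ≤ δ + 1 := by
          rw [dist_zero_right]; exact add_le_add le_rfl (hs x hx)
      _ = ρ := by norm_num
  have hfr : Module.finrank ℝ (EuclideanSpace ℝ (Fin n)) = n := finrank_euclideanSpace_fin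
  have I :
      (s.card : ℝ≥0∞) * ENNReal.ofReal (δ ^ n) * μ (ball 0 1) ≤
        ENNReal.ofReal (ρ ^ n) * μ (ball 0 1) := by
    calc
      (s.card : ℝ≥0∞) * ENNReal.ofReal (δ ^ n) * μ (ball 0 1) = μ A := by
        rw [hA, measure_biUnion_finset D fun c _ => measurableSet_ball]
        have : ∀ c ∈ s, μ (ball (c : EuclideanSpace ℝ (Fin n)) δ)
            = ENNReal.ofReal (δ ^ n) * μ (ball 0 1) := by
          intro c _
          rw [μ.addHaar_ball_of_pos _ δpos, hfr]
        rw [Finset.sum_congr rfl this]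
        simp [Finset.sum_const, mul_assoc]
      _ ≤ μ (ball (0 : EuclideanSpace ℝ (Fin n)) ρ) := measure_mono A_subset
      _ = ENNReal.ofReal (ρ ^ n) * μ (ball 0 1) := by
        rw [μ.addHaar_ball_of_pos _ ρpos, hfr]
  have J : (s.card : ℝ≥0∞) * ENNReal.ofReal (δ ^ n) ≤ ENNReal.ofReal (ρ ^ n) :=
    (ENNReal.mul_le_mul_iff_left (measure_ball_pos _ _ zero_lt_one).ne' measure_ball_lt_top.ne).1 I
  have K : (s.card : ℝ) ≤ (9 : ℝ) ^ n := by
    have hto := ENNReal.toReal_le_of_le_ofReal (pow_nonneg ρpos.le _) J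
    rw [ENNReal.toReal_mul, ENNReal.toReal_natCast,
      ENNReal.toReal_ofReal (pow_nonneg δpos.le _)] at hto
    have h9 : (9 : ℝ) ^ n = ρ ^ n / δ ^ n := by
      rw [← div_pow]; norm_num
    rw [h9, le_div_iff₀ (pow_pos δpos n)]
    exact hto
  exact_mod_cast K

/-- There is a (1/4)-net of the unit ball of cardinality at most `9 ^ n`. -/
lemma exists_net (n : ℕ) :
    ∃ N : Finset (EuclideanSpace ℝ (Fin n)),
      N.card ≤ 9 ^ n ∧ (∀ x ∈ N, ‖x‖ ≤ 1) ∧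
      ∀ x : EuclideanSpace ℝ (Fin n), ‖x‖ ≤ 1 → ∃ y ∈ N, ‖x - y‖ ≤ 1/4 := by
  classical
  set P : Finset (EuclideanSpace ℝ (Fin n)) → Prop := fun s =>
    (∀ c ∈ s, ‖c‖ ≤ 1) ∧ ∀ c ∈ s, ∀ d ∈ s, c ≠ d → 1/4 ≤ ‖c - d‖ with hP
  set S : Set ℕ := {k | ∃ s : Finset (EuclideanSpace ℝ (Fin n)), P s ∧ s.card = k} with hS
  have hSne : S.Nonempty := ⟨0, ∅, ⟨by simp, by simp⟩, rfl⟩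
  have hSbdd : BddAbove S := by
    refine ⟨9 ^ n, ?_⟩
    rintro k ⟨s, hs, rfl⟩
    exact card_le_of_separated s hs.1 hs.2
  obtain ⟨s, hsP, hscard⟩ : ∃ s : Finset (EuclideanSpace ℝ (Fin n)), P s ∧ s.card = sSup S :=
    Nat.sSup_mem hSne hSbdd
  refine ⟨s, ?_, hsP.1, ?_⟩
  · rw [hscard]
    exact csSup_le hSne (by rintro k ⟨t, ht, rfl⟩; exact card_le_of_separated t ht.1 ht.2)
  · intro x hx
    by_contra hcov
    push_neg at hcov
    have hxs : x ∉ s := by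
      intro hxs
      have := hcov x hxs
      rw [sub_self, norm_zero] at this
      linarith
    have hP' : P (insert x s) := by
      constructor
      · intro c hc
        rcases Finset.mem_insert.1 hc with rfl | hc
        · exact hx
        · exact hsP.1 c hc
      · intro c hc d hd hcd
        rcases Finset.mem_insert.1 hc with hcx | hc
        · rcases Finset.mem_insert.1 hd with hdx | hd
          · exact absurd (hcx.trans hdx.symm) hcd
          · rw [hcx]; exact (hcov d hd).le
        · rcases Finset.mem_insert.1 hd with hdx | hd
          · rw [hdx, norm_sub_rev]; exact (hcov c hc).le
          · exact hsP.2 c hc d hd hcd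
    have hmem : s.card + 1 ∈ S := ⟨insert x s, hP', by rw [Finset.card_insert_of_notMem hxs]⟩
    have := le_csSup hSbdd hmem
    omega

end OCB

namespace OCB

variable {Ω : Type} [MeasurableSpace Ω] {μ : Measure Ω} [IsProbabilityMeasure μ]
variable {n : ℕ} {E : Ω → Matrix (Fin n) (Fin n) ℝ}

lemma entry_ae (hE : IsBernoulliMatrix μ E) (i j : Fin n) :
    ∀ᵐ ω ∂μ, E ω i j = 1 ∨ E ω i j = -1 := by
  have hmeas := hE.1 i j
  have hAm : MeasurableSet {ω | E ω i j = 1} := hmeas (measurableSet_singleton 1)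
  have hBm : MeasurableSet {ω | E ω i j = -1} := hmeas (measurableSet_singleton (-1))
  have hAB : Disjoint {ω | E ω i j = 1} {ω | E ω i j = -1} := by
    rw [Set.disjoint_left]
    intro ω h1 h2
    rw [Set.mem_setOf_eq] at h1 h2
    rw [h1] at h2; norm_num at h2
  have hU : μ ({ω | E ω i j = 1} ∪ {ω | E ω i j = -1}) = 1 := by
    rw [measure_union hAB hBm, (hE.2.2 i j).1, (hE.2.2 i j).2]
    exact ENNReal.add_halves 1
  have hD : μ ({ω | E ω i j = 1} ∪ {ω | E ω i j = -1})ᶜ = 0 := by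
    rw [measure_compl (hAm.union hBm) (measure_ne_top μ _), hU, measure_univ, tsub_self]
  rw [ae_iff]
  apply measure_mono_null _ hD
  intro ω hω
  simp only [Set.mem_setOf_eq] at hω
  push_neg at hω
  simp only [Set.mem_compl_iff, Set.mem_union, Set.mem_setOf_eq]
  tauto

lemma entry_exp_integrable (hE : IsBernoulliMatrix μ E) (i j : Fin n) (a : ℝ) :
    Integrable (fun ω => Real.exp (a * E ω i j)) μ := by
  have hmeas : AEStronglyMeasurable (fun ω => Real.exp (a * E ω i j)) μ :=
    (((hE.1 i j).const_mul a).exp).aestronglyMeasurable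
  apply Integrable.mono' (integrable_const (Real.exp |a|)) hmeas
  filter_upwards [entry_ae hE i j] with ω h
  rcases h with h | h <;> rw [h] <;>
    simp only [mul_one, mul_neg_one, Real.norm_eq_abs, Real.abs_exp] <;>
    apply Real.exp_le_exp.2
  · exact le_abs_self a
  · exact neg_le_abs a

lemma entry_mgf (hE : IsBernoulliMatrix μ E) (i j : Fin n) (a : ℝ) :
    (∫ ω, Real.exp (a * E ω i j) ∂μ) = Real.cosh a := by
  have hmeas := hE.1 i j
  set A : Set Ω := {ω | E ω i j = 1} with hA
  set B : Set Ω := {ω | E ω i j = -1} with hB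
  have hAm : MeasurableSet A := hmeas (measurableSet_singleton 1)
  have hBm : MeasurableSet B := hmeas (measurableSet_singleton (-1))
  have hAB : Disjoint A B := by
    rw [Set.disjoint_left]
    intro ω h1 h2
    rw [hA, Set.mem_setOf_eq] at h1
    rw [hB, Set.mem_setOf_eq] at h2
    rw [h1] at h2; norm_num at h2
  set g : Ω → ℝ :=
    A.indicator (fun _ => Real.exp a) + B.indicator (fun _ => Real.exp (-a)) with hg
  have hae : (fun ω => Real.exp (a * E ω i j)) =ᵐ[μ] g := by
    filter_upwards [entry_ae hE i j] with ω h
    rcases h with h | h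
    · have hmem : ω ∈ A := h
      rw [hg]
      simp only [Pi.add_apply, Set.indicator_of_mem hmem,
        Set.indicator_of_notMem (Set.disjoint_left.1 hAB hmem)]
      rw [h, mul_one, add_zero]
    · have hmem : ω ∈ B := h
      rw [hg]
      simp only [Pi.add_apply, Set.indicator_of_mem hmem,
        Set.indicator_of_notMem (Set.disjoint_right.1 hAB hmem)]
      rw [h, mul_neg_one, zero_add]
  rw [integral_congr_ae hae, hg]
  have hiA : Integrable (A.indicator fun _ : Ω => Real.exp a) μ :=
    (integrable_const _).indicator hAm
  have hiB : Integrable (B.indicator fun _ : Ω => Real.exp (-a)) μ :=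
    (integrable_const _).indicator hBm
  simp only [Pi.add_apply]
  rw [integral_add hiA hiB, integral_indicator_const _ hAm, integral_indicator_const _ hBm, measureReal_def, measureReal_def,
    (hE.2.2 i j).1, (hE.2.2 i j).2, Real.cosh_eq]
  have h2 : ((1 : ℝ≥0∞)/2).toReal = 1/2 := by simp
  rw [h2]
  ring_nf

end OCB

namespace OCB

variable {Ω : Type} [MeasurableSpace Ω] {μ : Measure Ω} [IsProbabilityMeasure μ]
variable {n : ℕ} {E : Ω → Matrix (Fin n) (Fin n) ℝ}

lemma bilin_tail (hE : IsBernoulliMatrix μ E)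
    (u v : Fin n → ℝ) (hu : ∑ i, u i ^ 2 ≤ 1) (hv : ∑ i, v i ^ 2 ≤ 1)
    {t : ℝ} (ht : 0 ≤ t) :
    μ {ω | t ≤ ∑ p : Fin n × Fin n, u p.1 * v p.2 * E ω p.1 p.2}
      ≤ ENNReal.ofReal (Real.exp (-t ^ 2 / 2)) := by
  classical
  set c : Fin n × Fin n → ℝ := fun p => u p.1 * v p.2 with hc
  have hu0 : 0 ≤ ∑ i, u i ^ 2 := Finset.sum_nonneg fun i _ => sq_nonneg _
  have hc2 : ∑ p : Fin n × Fin n, c p ^ 2 ≤ 1 := by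
    have : ∑ p : Fin n × Fin n, c p ^ 2 = (∑ i, u i ^ 2) * ∑ j, v j ^ 2 := by
      rw [Fintype.sum_prod_type, Finset.sum_mul]
      exact Finset.sum_congr rfl fun i _ => by
        rw [Finset.mul_sum]
        exact Finset.sum_congr rfl fun j _ => by ring
    rw [this]
    exact mul_le_one₀ hu (Finset.sum_nonneg fun i _ => sq_nonneg _) hv
  set X : Fin n × Fin n → Ω → ℝ := fun p ω => c p * E ω p.1 p.2 with hX
  have hXmeas : ∀ p, Measurable (X p) := fun p => (hE.1 p.1 p.2).const_mul (c p)
  have hXindep : iIndepFun X μ :=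
    hE.2.1.comp (fun p (x : ℝ) => c p * x) (fun p => measurable_const_mul _)
  have hXint : ∀ p : Fin n × Fin n, Integrable (fun ω => Real.exp (t * X p ω)) μ := by
    intro p
    have := entry_exp_integrable hE p.1 p.2 (t * c p)
    simpa [hX, mul_assoc] using this
  have hmgf : ∀ p : Fin n × Fin n, mgf (X p) μ t = Real.cosh (t * c p) := by
    intro p
    rw [mgf]
    have := entry_mgf hE p.1 p.2 (t * c p)
    rw [← this]
    congr 1
    funext ω
    rw [hX]
    ring_nf
  set S : Ω → ℝ := ∑ p : Fin n × Fin n, X p with hS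
  have hSsum : ∀ ω, S ω = ∑ p : Fin n × Fin n, u p.1 * v p.2 * E ω p.1 p.2 := by
    intro ω
    rw [hS, Finset.sum_apply]
  have hmgfS : mgf S μ t ≤ Real.exp (t ^ 2 / 2) := by
    rw [hS, hXindep.mgf_sum hXmeas]
    calc ∏ p : Fin n × Fin n, mgf (X p) μ t = ∏ p : Fin n × Fin n, Real.cosh (t * c p) :=
          Finset.prod_congr rfl fun p _ => hmgf p
      _ ≤ ∏ p : Fin n × Fin n, Real.exp ((t * c p) ^ 2 / 2) :=
          Finset.prod_le_prod (fun p _ => (Real.cosh_pos _).le)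
            (fun p _ => Real.cosh_le_exp_half_sq _)
      _ = Real.exp (∑ p : Fin n × Fin n, (t * c p) ^ 2 / 2) := by rw [Real.exp_sum]
      _ ≤ Real.exp (t ^ 2 / 2) := by
          apply Real.exp_le_exp.2
          have : ∑ p : Fin n × Fin n, (t * c p) ^ 2 / 2
              = t ^ 2 / 2 * ∑ p : Fin n × Fin n, c p ^ 2 := by
            rw [Finset.mul_sum]
            exact Finset.sum_congr rfl fun p _ => by ring
          rw [this]
          nlinarith [sq_nonneg t]
  have hSint : Integrable (fun ω => Real.exp (t * S ω)) μ := by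
    rw [hS]
    exact hXindep.integrable_exp_mul_sum hXmeas (fun p _ => hXint p)
  have hcher := measure_ge_le_exp_mul_mgf (X := S) (μ := μ) (t := t) t ht hSint
  have hbound : (μ {ω | t ≤ S ω}).toReal ≤ Real.exp (-t ^ 2 / 2) := by
    calc (μ {ω | t ≤ S ω}).toReal ≤ Real.exp (-t * t) * mgf S μ t := hcher
      _ ≤ Real.exp (-t * t) * Real.exp (t ^ 2 / 2) :=
          mul_le_mul_of_nonneg_left hmgfS (Real.exp_nonneg _)
      _ = Real.exp (-t ^ 2 / 2) := by rw [← Real.exp_add]; ring_nf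
  have hset : {ω | t ≤ ∑ p : Fin n × Fin n, u p.1 * v p.2 * E ω p.1 p.2} = {ω | t ≤ S ω} := by
    ext ω; rw [Set.mem_setOf_eq, Set.mem_setOf_eq, hSsum]
  rw [hset, ← ENNReal.ofReal_toReal (measure_ne_top μ {ω | t ≤ S ω})]
  exact ENNReal.ofReal_le_ofReal hbound

end OCB

namespace OCB

variable {n : ℕ}

lemma opbound_of_net (M : Matrix (Fin n) (Fin n) ℝ) {N : Finset (EuclideanSpace ℝ (Fin n))}
    (hNball : ∀ x ∈ N, ‖x‖ ≤ 1)
    (hNnet : ∀ x : EuclideanSpace ℝ (Fin n), ‖x‖ ≤ 1 → ∃ y ∈ N, ‖x - y‖ ≤ 1/4)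
    {t : ℝ} (ht : 0 ≤ t)
    (hM : ∀ a ∈ N, ∀ b ∈ N, ∑ p : Fin n × Fin n, a p.1 * b p.2 * M p.1 p.2 ≤ t) :
    ∀ v : Fin n → ℝ, eucNorm v = 1 → eucNorm (M.mulVec v) ≤ 2 * t := by
  set g : EuclideanSpace ℝ (Fin n) →L[ℝ] EuclideanSpace ℝ (Fin n) :=
    LinearMap.toContinuousLinearMap (mulVecLM M) with hg
  have hgapply : ∀ x : EuclideanSpace ℝ (Fin n), g x = toE (M.mulVec x) := fun x => rfl
  have hinner : ∀ x y : EuclideanSpace ℝ (Fin n),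
      (inner ℝ x (g y) : ℝ) = ∑ p : Fin n × Fin n, x p.1 * y p.2 * M p.1 p.2 := by
    intro x y
    rw [hgapply, PiLp.inner_apply, Fintype.sum_prod_type]
    refine Finset.sum_congr rfl fun i _ => ?_
    have : (toE (M.mulVec y)) i = ∑ j, M i j * y j := rfl
    simp only [RCLike.inner_apply, conj_trivial, this, Finset.mul_sum, Finset.sum_mul]
    refine Finset.sum_congr rfl fun j _ => by ring
  have hgnn : (0:ℝ) ≤ ‖g‖ := norm_nonneg _
  have step2 : ∀ x y : EuclideanSpace ℝ (Fin n), ‖x‖ ≤ 1 → ‖y‖ ≤ 1 →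
      (inner ℝ x (g y) : ℝ) ≤ t + ‖g‖ / 2 := by
    intro x y hx hy
    obtain ⟨x₀, hx₀N, hxx₀⟩ := hNnet x hx
    obtain ⟨y₀, hy₀N, hyy₀⟩ := hNnet y hy
    have hexp : (inner ℝ x (g y) : ℝ)
        = (inner ℝ x₀ (g y₀) : ℝ) + (inner ℝ (x - x₀) (g y) : ℝ)
          + (inner ℝ x₀ (g (y - y₀)) : ℝ) := by
      rw [inner_sub_left, map_sub, inner_sub_right]
      ring
    have hb1 : (inner ℝ (x - x₀) (g y) : ℝ) ≤ ‖g‖ / 4 := by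
      calc (inner ℝ (x - x₀) (g y) : ℝ) ≤ ‖x - x₀‖ * ‖g y‖ := real_inner_le_norm _ _
        _ ≤ (1/4) * (‖g‖ * 1) := by
            apply mul_le_mul hxx₀ _ (norm_nonneg _) (by norm_num)
            calc ‖g y‖ ≤ ‖g‖ * ‖y‖ := g.le_opNorm y
              _ ≤ ‖g‖ * 1 := by nlinarith
        _ = ‖g‖ / 4 := by ring
    have hb2 : (inner ℝ x₀ (g (y - y₀)) : ℝ) ≤ ‖g‖ / 4 := by
      calc (inner ℝ x₀ (g (y - y₀)) : ℝ) ≤ ‖x₀‖ * ‖g (y - y₀)‖ := real_inner_le_norm _ _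
        _ ≤ 1 * (‖g‖ * (1/4)) := by
            apply mul_le_mul (hNball x₀ hx₀N) _ (norm_nonneg _) (by norm_num)
            calc ‖g (y - y₀)‖ ≤ ‖g‖ * ‖y - y₀‖ := g.le_opNorm _
              _ ≤ ‖g‖ * (1/4) := by nlinarith
        _ = ‖g‖ / 4 := by ring
    have hb0 : (inner ℝ x₀ (g y₀) : ℝ) ≤ t := by rw [hinner]; exact hM x₀ hx₀N y₀ hy₀N
    rw [hexp]
    linarith
  have step3 : ∀ y : EuclideanSpace ℝ (Fin n), ‖y‖ ≤ 1 → ‖g y‖ ≤ t + ‖g‖ / 2 := by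
    intro y hy
    rcases eq_or_ne (g y) 0 with h0 | h0
    · rw [h0, norm_zero]; linarith
    · have hgy : 0 < ‖g y‖ := norm_pos_iff.2 h0
      have hx : ‖(‖g y‖⁻¹ • g y : EuclideanSpace ℝ (Fin n))‖ ≤ 1 := by
        rw [norm_smul, norm_inv, norm_norm]
        rw [inv_mul_cancel₀ hgy.ne']
      have := step2 _ y hx hy
      rw [real_inner_smul_left, real_inner_self_eq_norm_sq] at this
      have heq : ‖g y‖⁻¹ * ‖g y‖ ^ 2 = ‖g y‖ := by field_simp
      rw [heq] at this
      exact this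
  have step4 : ‖g‖ ≤ 2 * t := by
    have hle : ‖g‖ ≤ t + ‖g‖ / 2 := by
      apply ContinuousLinearMap.opNorm_le_bound g (by linarith)
      intro x
      rcases eq_or_ne x 0 with rfl | hx0
      · rw [g.map_zero, norm_zero, mul_zero]
      · have hxpos : 0 < ‖x‖ := norm_pos_iff.2 hx0
        have hunit : ‖(‖x‖⁻¹ • x : EuclideanSpace ℝ (Fin n))‖ ≤ 1 := by
          rw [norm_smul, norm_inv, norm_norm, inv_mul_cancel₀ hxpos.ne']
        have := step3 _ hunit
        rw [g.map_smul, norm_smul, norm_inv, norm_norm] at this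
        rw [inv_mul_le_iff₀ hxpos] at this
        linarith [this]
    linarith
  intro v hv
  have h1 : eucNorm (M.mulVec v) = ‖g (toE v)‖ := by rw [hgapply]; exact eucNorm_eq_norm _
  rw [h1]
  calc ‖g (toE v)‖ ≤ ‖g‖ * ‖toE v‖ := g.le_opNorm _
    _ = ‖g‖ := by rw [← eucNorm_eq_norm, hv, mul_one]
    _ ≤ 2 * t := step4

end OCB

/-- Bound on the component of `v₁'` orthogonal to the row space of `A` (equation (3.3)):
writing `v₁' = w + c₀ u` with `w` in the row space of `A`, `u` a unit vector orthogonal to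
it and `c₀ ≥ 0`, we have `c₀² ≤ C√n/σ₁` with probability at least `1 - η`. -/
theorem orthogonal_component_bound (α₁ α₂ : ℝ) (hα₁ : 0 < α₁) (hα₂ : 0 < α₂) :
    ∃ C : ℝ, 0 < C ∧ ∀ η : ℝ, 0 < η → ∃ n₀ : ℕ, ∀ n ≥ n₀,
      ∀ (A : Matrix (Fin n) (Fin n) ℝ) (r : ℕ)
        (Ω : Type) [MeasurableSpace Ω] (μ : Measure Ω) [IsProbabilityMeasure μ]
        (E : Ω → Matrix (Fin n) (Fin n) ℝ),
        A.rank = r →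
        (r : ℝ) ≤ (n : ℝ) ^ (1 - α₁) →
        singVal A 1 ≤ (n : ℝ) ^ α₂ →
        0 < singVal A 1 - singVal A 2 →
        IsBernoulliMatrix μ E →
        μ {ω | ∀ (v₁' w u : Fin n → ℝ) (c₀ : ℝ),
              IsUnitSingVec (A + E ω) (singVal (A + E ω) 1) v₁' →
              w ∈ Submodule.span ℝ (Set.range fun i : Fin n => A i) →
              eucNorm u = 1 →
              (∀ x ∈ Submodule.span ℝ (Set.range fun i : Fin n => A i),
                ∑ l, u l * x l = 0) →
              0 ≤ c₀ →
              v₁' = w + c₀ • u →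
              c₀ ^ 2 ≤ C * Real.sqrt n / singVal A 1}
          ≥ 1 - ENNReal.ofReal η := by
  classical
  refine ⟨32, by norm_num, ?_⟩
  intro η hη
  refine ⟨⌈-Real.log η / 3⌉₊ + 1, ?_⟩
  intro n hn A r Ω _ μ _ E hrank hr hσ hgap hE
  have hn1 : 0 < n := lt_of_lt_of_le (Nat.succ_pos _) hn
  -- the tail quantity is small
  have hηn : Real.exp (-(3:ℝ) * n) ≤ η := by
    have h1 : -Real.log η / 3 ≤ (n : ℝ) := by
      have h2 : -Real.log η / 3 ≤ (⌈-Real.log η / 3⌉₊ : ℝ) := Nat.le_ceil _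
      have h3 : (⌈-Real.log η / 3⌉₊ : ℝ) ≤ (n : ℝ) := by
        exact_mod_cast le_trans (Nat.le_succ _) hn
      linarith
    have h4 : -(3:ℝ) * n ≤ Real.log η := by nlinarith
    calc Real.exp (-(3:ℝ) * n) ≤ Real.exp (Real.log η) := Real.exp_le_exp.2 h4
      _ = η := Real.exp_log hη
  obtain ⟨N, hNcard, hNball, hNnet⟩ := OCB.exists_net n
  set t : ℝ := 4 * Real.sqrt n with htdef
  have ht : 0 ≤ t := by positivity
  set T : Set Ω := {ω | ∀ a ∈ N, ∀ b ∈ N,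
      ∑ p : Fin n × Fin n, a p.1 * b p.2 * E ω p.1 p.2 ≤ t} with hT
  have hXmeas : ∀ a b : EuclideanSpace ℝ (Fin n),
      Measurable fun ω => ∑ p : Fin n × Fin n, a p.1 * b p.2 * E ω p.1 p.2 := by
    intro a b
    apply Finset.measurable_sum
    intro p _
    exact ((hE.1 p.1 p.2).const_mul _)
  have hTmeas : MeasurableSet T := by
    have : T = ⋂ a ∈ N, ⋂ b ∈ N,
        {ω | ∑ p : Fin n × Fin n, a p.1 * b p.2 * E ω p.1 p.2 ≤ t} := by
      ext ω
      simp only [hT, Set.mem_setOf_eq, Set.mem_iInter]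
    rw [this]
    exact MeasurableSet.biInter N.countable_toSet fun a _ =>
      MeasurableSet.biInter N.countable_toSet fun b _ =>
        measurableSet_le (hXmeas a b) measurable_const
  have hsq2 : (∀ x ∈ N, ∑ i, x i ^ 2 ≤ 1) := by
    intro x hx
    have h1 : eucNorm (x : Fin n → ℝ) = ‖x‖ := OCB.eucNorm_eq_norm x
    have h2 : ∑ i, x i ^ 2 = ‖x‖ ^ 2 := by rw [← OCB.eucNorm_sq, h1]
    rw [h2]
    have := hNball x hx
    nlinarith [norm_nonneg x]
  -- bound the complement
  have hTc : μ Tᶜ ≤ ENNReal.ofReal η := by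
    have hsub : Tᶜ ⊆ ⋃ a ∈ N, ⋃ b ∈ N,
        {ω | t ≤ ∑ p : Fin n × Fin n, a p.1 * b p.2 * E ω p.1 p.2} := by
      intro ω hω
      simp only [hT, Set.mem_compl_iff, Set.mem_setOf_eq, not_forall] at hω
      obtain ⟨a, ha, b, hb, hab⟩ := hω
      refine Set.mem_biUnion ha (Set.mem_biUnion hb ?_)
      rw [Set.mem_setOf_eq]
      linarith [lt_of_not_ge hab]
    have htail : ∀ a ∈ N, ∀ b ∈ N,
        μ {ω | t ≤ ∑ p : Fin n × Fin n, a p.1 * b p.2 * E ω p.1 p.2}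
          ≤ ENNReal.ofReal (Real.exp (-(8:ℝ) * n)) := by
      intro a ha b hb
      have := OCB.bilin_tail hE a b (hsq2 a ha) (hsq2 b hb) ht
      have ht2 : -t ^ 2 / 2 = -(8:ℝ) * n := by
        rw [htdef]
        have : (Real.sqrt n) ^ 2 = (n : ℝ) := Real.sq_sqrt (Nat.cast_nonneg n)
        nlinarith [this]
      rwa [ht2] at this
    calc μ Tᶜ ≤ μ (⋃ a ∈ N, ⋃ b ∈ N,
          {ω | t ≤ ∑ p : Fin n × Fin n, a p.1 * b p.2 * E ω p.1 p.2}) := measure_mono hsub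
      _ ≤ ∑ a ∈ N, μ (⋃ b ∈ N,
          {ω | t ≤ ∑ p : Fin n × Fin n, a p.1 * b p.2 * E ω p.1 p.2}) :=
            measure_biUnion_finset_le N _
      _ ≤ ∑ a ∈ N, ∑ b ∈ N,
          μ {ω | t ≤ ∑ p : Fin n × Fin n, a p.1 * b p.2 * E ω p.1 p.2} :=
            Finset.sum_le_sum fun a _ => measure_biUnion_finset_le N _
      _ ≤ ∑ _a ∈ N, ∑ _b ∈ N, ENNReal.ofReal (Real.exp (-(8:ℝ) * n)) :=
            Finset.sum_le_sum fun a ha => Finset.sum_le_sum fun b hb => htail a ha b hb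
      _ = (N.card : ℝ≥0∞) * (N.card : ℝ≥0∞) * ENNReal.ofReal (Real.exp (-(8:ℝ) * n)) := by
            rw [Finset.sum_const, Finset.sum_const, nsmul_eq_mul, nsmul_eq_mul]
            ring
      _ ≤ ((9:ℝ≥0∞) ^ n) * ((9:ℝ≥0∞) ^ n) * ENNReal.ofReal (Real.exp (-(8:ℝ) * n)) := by
            have hc : (N.card : ℝ≥0∞) ≤ (9:ℝ≥0∞) ^ n := by
              calc (N.card : ℝ≥0∞) ≤ ((9 ^ n : ℕ) : ℝ≥0∞) := Nat.cast_le.2 hNcard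
                _ = (9:ℝ≥0∞) ^ n := by rw [Nat.cast_pow]; norm_num
            exact mul_le_mul' (mul_le_mul' hc hc) le_rfl
      _ = ENNReal.ofReal ((81:ℝ) ^ n * Real.exp (-(8:ℝ) * n)) := by
            rw [ENNReal.ofReal_mul (by positivity)]
            congr 1
            rw [ENNReal.ofReal_pow (by norm_num : (0:ℝ) ≤ 81)]
            rw [← mul_pow]
            norm_num
      _ ≤ ENNReal.ofReal η := by
            apply ENNReal.ofReal_le_ofReal
            have h81 : (81:ℝ) ≤ Real.exp 5 := by
              have h1 : (2.7:ℝ) ≤ Real.exp 1 := by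
                have := Real.exp_one_gt_d9
                linarith
              have h2 : (2.7:ℝ) ^ 5 ≤ (Real.exp 1) ^ 5 := by
                apply pow_le_pow_left₀ (by norm_num) h1
              have h3 : (Real.exp 1) ^ 5 = Real.exp 5 := by
                rw [← Real.exp_nat_mul]; norm_num
              nlinarith
            have h81n : (81:ℝ) ^ n ≤ Real.exp 5 ^ n := pow_le_pow_left₀ (by norm_num) h81 n
            have hexp : Real.exp 5 ^ n = Real.exp (5 * n) := by
              rw [← Real.exp_nat_mul]; ring_nf
            calc (81:ℝ) ^ n * Real.exp (-(8:ℝ) * n)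
                ≤ Real.exp (5 * n) * Real.exp (-(8:ℝ) * n) := by
                  rw [← hexp]
                  exact mul_le_mul_of_nonneg_right h81n (Real.exp_nonneg _)
              _ = Real.exp (-(3:ℝ) * n) := by rw [← Real.exp_add]; ring_nf
              _ ≤ η := hηn
  have hμT : 1 - ENNReal.ofReal η ≤ μ T := by
    have h1 : μ Tᶜ = 1 - μ T := prob_compl_eq_one_sub hTmeas
    have h2 : 1 - ENNReal.ofReal η ≤ 1 - μ Tᶜ := tsub_le_tsub_left hTc 1
    have h3 : 1 - μ Tᶜ = μ T := by
      rw [h1, ENNReal.sub_sub_cancel ENNReal.one_ne_top prob_le_one]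
    exact le_trans h2 (le_of_eq h3)
  refine le_trans hμT (measure_mono ?_)
  intro ω hω
  have hEop : ∀ v : Fin n → ℝ, eucNorm v = 1 →
      eucNorm ((E ω).mulVec v) ≤ 8 * Real.sqrt n := by
    intro v hv
    have := OCB.opbound_of_net (E ω) hNball hNnet ht hω v hv
    rw [htdef] at this
    linarith [this]
  exact fun v₁' w u c₀ h1 h2 h3 h4 h5 h6 =>
    OCB.deterministic_bound hn1 A (E ω) hgap hEop v₁' w u c₀ h1 h2 h3 h4 h5 h6
end
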